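/- arXiv:2107.00794 — 8 statements merged into one kernel-verified Lean document; each statement's English description precedes it below -/
import Mathlib

section
/- Let $R=\mathbb{Z}[z_1^{\pm 1},\ldots,z_n^{\pm 1}]$ be the Laurent polynomial ring in $n$ variables over $\mathbb{Z}$, let $M$ be an $R$-module, let $N \subseteq M$ be an $R$-submodule, and let $m_1,\ldots,m_n \in M$. Assume that $z_1^d \cdot m_1 + \cdots + z_n^d \cdot m_n \in N$ for all integers $d \geq 1$. Then $m_1+\cdots+m_n \in N$. -/
/-- The Laurent polynomial ring `ℤ[z₁^{±1},…,zₙ^{±1}]`, realized as the group ring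
of `ℤⁿ` over `ℤ`. -/
abbrev LaurentRing (n : ℕ) : Type := AddMonoidAlgebra ℤ (Fin n → ℤ)

/-- The variable `zᵢ`, a unit of the Laurent polynomial ring. -/
noncomputable def laurentVar {n : ℕ} (i : Fin n) : LaurentRing n :=
  AddMonoidAlgebra.single (Pi.single i 1) 1

lemma laurentVar_isUnit {n : ℕ} (i : Fin n) : IsUnit (laurentVar i) := by
  refine isUnit_iff_exists_inv.2 ⟨AddMonoidAlgebra.single (-(Pi.single i 1)) 1, ?_⟩
  rw [laurentVar, AddMonoidAlgebra.single_mul_single, add_neg_cancel, one_mul,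
    ← AddMonoidAlgebra.one_def]

theorem stmt0 (n : ℕ) (M : Type) [AddCommGroup M] [Module (LaurentRing n) M]
    (N : Submodule (LaurentRing n) M) (m : Fin n → M)
    (h : ∀ d : ℕ, 1 ≤ d → (∑ i : Fin n, (laurentVar i ^ d) • m i) ∈ N) :
    (∑ i : Fin n, m i) ∈ N := by
  classical
  set P : Polynomial (LaurentRing n) :=
    ∏ i : Fin n, (Polynomial.X - Polynomial.C (laurentVar i)) with hP
  have hdeg : P.natDegree < n + 1 := by
    rw [hP, Polynomial.natDegree_prod _ _
      (fun i _ => (Polynomial.monic_X_sub_C _).ne_zero)]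
    simp [Polynomial.natDegree_X_sub_C]
  have heval : ∀ j : Fin n, P.eval (laurentVar j) = 0 := by
    intro j
    rw [hP, Polynomial.eval_prod]
    exact Finset.prod_eq_zero (Finset.mem_univ j) (by simp)
  set w : ℕ → M := fun k => ∑ j : Fin n, (laurentVar j ^ k) • m j with hw
  have key : ∑ k ∈ Finset.range (n + 1), P.coeff k • w k = 0 := by
    have hj : ∀ j : Fin n,
        ∑ k ∈ Finset.range (n + 1), (P.coeff k * laurentVar j ^ k) • m j = 0 := by
      intro j
      rw [← Finset.sum_smul, ← Polynomial.eval_eq_sum_range' hdeg, heval, zero_smul]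
    calc ∑ k ∈ Finset.range (n + 1), P.coeff k • w k
        = ∑ j : Fin n, ∑ k ∈ Finset.range (n + 1),
            (P.coeff k * laurentVar j ^ k) • m j := by
          rw [Finset.sum_comm]
          simp [hw, Finset.smul_sum, smul_smul]
      _ = 0 := by simp [hj]
  rw [Finset.sum_range_succ'] at key
  have hmem : P.coeff 0 • w 0 ∈ N := by
    have : P.coeff 0 • w 0 =
        -∑ i ∈ Finset.range n, P.coeff (i + 1) • w (i + 1) := by
      linear_combination (norm := abel) key
    rw [this]
    exact N.neg_mem (N.sum_mem fun i _ => N.smul_mem _ (h (i + 1) (Nat.succ_le_succ (Nat.zero_le i))))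
  have hunit : IsUnit (P.coeff 0) := by
    have : P.coeff 0 = ∏ i : Fin n, (-(laurentVar i)) := by
      rw [Polynomial.coeff_zero_eq_eval_zero, hP, Polynomial.eval_prod]
      simp
    rw [this]
    exact Finset.prod_induction _ IsUnit (fun a b => IsUnit.mul) isUnit_one
      fun i _ => (laurentVar_isUnit i).neg
  obtain ⟨u, hu⟩ := hunit
  have h0 : w 0 = ∑ i : Fin n, m i := by simp [hw]
  rw [← hu] at hmem
  have := N.smul_mem ((↑u⁻¹ : LaurentRing n)) hmem
  rwa [smul_smul, Units.inv_mul, one_smul, h0] at this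
end

section
/- Let $R=\mathbb{Z}[z_1^{\pm 1},\ldots,z_n^{\pm 1}]$ be the Laurent polynomial ring in $n$ variables over $\mathbb{Z}$, let $M$ be an $R$-module, let $N \subseteq M$ be an $R$-submodule, and let $m_1,\ldots,m_n \in M$. Let $D$ be a set of positive integers that is cofinal for divisibility, i.e., for every positive integer $e$ there exists $d \in D$ with $e \mid d$. Assume that $z_1^d \cdot m_1 + \cdots + z_n^d \cdot m_n \in N$ for all $d \in D$. Then $m_1+\cdots+m_n \in N$. -/
open Ideal

-- ℤ is a Jacobson ring
instance intJacobson : IsJacobsonRing ℤ := by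
  rw [isJacobsonRing_iff_prime_eq]
  intro P hP
  rcases eq_or_ne P ⊥ with rfl | hne
  · refine le_antisymm ?_ Ideal.le_jacobson
    intro x hx
    have hu := Ideal.mem_jacobson_bot.mp hx (-x)
    rw [Int.isUnit_iff] at hu
    rcases hu with h1 | h1
    · have hxx : x * x = 0 := by linear_combination -h1
      have := mul_self_eq_zero.mp hxx
      simp [this]
    · exfalso
      have hxx : x * x = 2 := by linear_combination -h1
      have h2 : x ∣ 2 := ⟨x, hxx.symm⟩
      have hb : |x| ≤ 2 := Int.le_of_dvd (by norm_num) ((abs_dvd x 2).mpr h2)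
      rw [abs_le] at hb
      obtain ⟨hb1, hb2⟩ := hb
      interval_cases x <;> norm_num at hxx
  · haveI := IsPrime.to_maximal_ideal hne
    exact Ideal.jacobson_eq_self_of_isMaximal

-- a field finitely generated as ℤ-module is finite
lemma finite_of_field_of_moduleFiniteInt (F : Type*) [Field F] [Module.Finite ℤ F] :
    Finite F := by
  have hchar : ringChar F ≠ 0 := by
    intro h0
    haveI : CharP F 0 := h0 ▸ ringChar.charP F
    haveI : CharZero F := CharP.charP_to_charZero F
    have h2 : (2 : F) ≠ 0 := two_ne_zero
    obtain ⟨r, hr2, hrx⟩ :=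
      Submodule.exists_mem_and_smul_eq_self_of_fg_of_le_smul (Ideal.span {(2 : ℤ)})
        (⊤ : Submodule ℤ F) Module.Finite.fg_top (by
          intro x _
          have hx : x = (2 : ℤ) • ((2 : F)⁻¹ * x) := by
            rw [zsmul_eq_mul]
            push_cast
            rw [← mul_assoc, mul_inv_cancel₀ h2, one_mul]
          rw [hx]
          exact Submodule.smul_mem_smul (Ideal.subset_span rfl) trivial)
    have h1 : r • (1 : F) = 1 := hrx 1 trivial
    rw [zsmul_eq_mul, mul_one] at h1
    have : ((r - 1 : ℤ) : F) = 0 := by push_cast; rw [h1]; ring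
    have hr1 : r = 1 := by
      have := Int.cast_injective (α := F) (by push_cast; rw [h1] : ((r : ℤ) : F) = ((1 : ℤ) : F))
      exact this
    obtain ⟨t, ht⟩ := Ideal.mem_span_singleton'.mp hr2
    omega
  haveI : CharP F (ringChar F) := ringChar.charP F
  haveI : NeZero (ringChar F) := ⟨hchar⟩
  letI : Algebra (ZMod (ringChar F)) F := ZMod.algebra F _
  haveI : Module.Finite (ZMod (ringChar F)) F :=
    Module.Finite.of_restrictScalars_finite ℤ (ZMod (ringChar F)) F
  exact Module.finite_of_finite (ZMod (ringChar F))

-- finiteness of quotient by a product of ideals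
lemma finite_quot_mul {R : Type*} [CommRing R] (I J : Ideal R) (hJ : J.FG)
    [Finite (R ⧸ I)] [Finite (R ⧸ J)] : Finite (R ⧸ (I * J)) := by
  obtain ⟨s, hs⟩ := hJ
  set f := Ideal.Quotient.mk (I * J) with hf
  set K : Ideal (R ⧸ (I * J)) := J.map f with hK
  have hmemJ : ∀ i ∈ s, i ∈ J := fun i hi => by
    rw [← hs]; exact Submodule.subset_span hi
  haveI : Finite ((R ⧸ (I * J)) ⧸ K) :=
    Finite.of_equiv _ (DoubleQuot.quotQuotEquivQuotOfLE (Ideal.mul_le_right)).symm.toEquiv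
  haveI : Finite K := by
    have hout : ∀ y : R ⧸ I, Ideal.Quotient.mk I (Quotient.out y) = y := fun y =>
      Quotient.out_eq y
    set g : (s → R ⧸ I) → K := fun c =>
      ⟨f (∑ i ∈ s.attach, Quotient.out (c i) * (i : R)), by
        refine Ideal.mem_map_of_mem f (Submodule.sum_mem _ fun i _ => ?_)
        exact J.mul_mem_left _ (hmemJ i i.2)⟩ with hg
    have hgsurj : Function.Surjective g := by
      rintro ⟨y, hy⟩
      obtain ⟨r, hrJ, hry⟩ :=
        (Ideal.mem_map_iff_of_surjective f Ideal.Quotient.mk_surjective).mp hy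
      rw [← hs] at hrJ
      obtain ⟨a, -, ha⟩ := Submodule.mem_span_finset.mp hrJ
      refine ⟨fun i => Ideal.Quotient.mk I (a (i : R)), ?_⟩
      apply Subtype.ext
      show f (∑ i ∈ s.attach, Quotient.out (Ideal.Quotient.mk I (a (i : R))) * (i : R)) = y
      rw [← hry]
      apply (Ideal.Quotient.eq).mpr
      rw [← ha, ← Finset.sum_attach s (fun i => a i • i)]
      rw [← Finset.sum_sub_distrib]
      refine Submodule.sum_mem _ fun i _ => ?_
      have hdiff : Quotient.out (Ideal.Quotient.mk I (a (i : R))) - a (i : R) ∈ I := by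
        apply (Ideal.Quotient.eq).mp
        rw [hout]
      have : Quotient.out (Ideal.Quotient.mk I (a (i : R))) * (i : R) - a (i : R) • (i : R)
          = (Quotient.out (Ideal.Quotient.mk I (a (i : R))) - a (i : R)) * (i : R) := by
        rw [smul_eq_mul]; ring
      rw [this]
      exact Ideal.mul_mem_mul hdiff (hmemJ i i.2)
    exact Finite.of_surjective g hgsurj
  exact Finite.of_ideal_quotient K

lemma finite_quot_pow {R : Type*} [CommRing R] [IsNoetherianRing R] (m : Ideal R)
    [Finite (R ⧸ m)] (k : ℕ) : Finite (R ⧸ (m ^ k : Ideal R)) := by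
  induction k with
  | zero =>
    haveI : Subsingleton (R ⧸ (m ^ 0 : Ideal R)) := by
      rw [Ideal.Quotient.subsingleton_iff, pow_zero, Ideal.one_eq_top]
    infer_instance
  | succ k ih =>
    haveI := ih
    have := finite_quot_mul (m ^ k) m (IsNoetherian.noetherian m)
    rwa [← pow_succ] at this


theorem stmt1 (n : ℕ) (M : Type) [AddCommGroup M] [Module (LaurentRing n) M]
    (N : Submodule (LaurentRing n) M) (m : Fin n → M)
    (D : Set ℕ) (hDpos : ∀ d ∈ D, 1 ≤ d)
    (hDcofinal : ∀ e : ℕ, 1 ≤ e → ∃ d ∈ D, e ∣ d)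
    (h : ∀ d ∈ D, (∑ i : Fin n, (laurentVar i ^ d) • m i) ∈ N) :
    (∑ i : Fin n, m i) ∈ N := by
  set R := LaurentRing n with hR
  -- basic instances
  haveI : AddGroup.FG (Fin n → ℤ) := Module.Finite.iff_addGroup_fg.mp inferInstance
  haveI : AddMonoid.FG (Fin n → ℤ) := AddGroup.fg_iff_addMonoid_fg.mp inferInstance
  haveI : Algebra.FiniteType ℤ R := AddMonoidAlgebra.finiteType_of_fg ℤ _
  haveI : IsNoetherianRing R := Algebra.FiniteType.isNoetherianRing ℤ _
  -- residue fields are finite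
  have hres : ∀ m : Ideal R, m.IsMaximal → Finite (R ⧸ m) := by
    intro p hp
    letI : Field (R ⧸ p) := Ideal.Quotient.field p
    haveI : Algebra.FiniteType ℤ (R ⧸ p) :=
      Algebra.FiniteType.of_surjective (Ideal.Quotient.mkₐ ℤ p)
        (Ideal.Quotient.mkₐ_surjective ℤ p)
    haveI : Module.Finite ℤ (R ⧸ p) := finite_of_finite_type_of_isJacobsonRing ℤ (R ⧸ p)
    exact finite_of_field_of_moduleFiniteInt (R ⧸ p)
  -- the variables are units
  have hunit : ∀ i : Fin n, IsUnit (laurentVar i) := by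
    intro i
    refine IsUnit.of_mul_eq_one (AddMonoidAlgebra.single (-(Pi.single i 1)) 1) ?_
    rw [laurentVar, AddMonoidAlgebra.single_mul_single, add_neg_cancel, one_mul,
      AddMonoidAlgebra.one_def]
  -- pass to the quotient module
  set π := N.mkQ with hπ
  set x : M ⧸ N := ∑ i : Fin n, π (m i) with hx
  set Q : Submodule R (M ⧸ N) := Submodule.span R (Set.range fun i => π (m i)) with hQ
  haveI : Module.Finite R Q := Module.Finite.span_of_finite R (Set.finite_range _)
  have hmQ : ∀ i, π (m i) ∈ Q := fun i => Submodule.subset_span (Set.mem_range_self i)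
  have hxQ : x ∈ Q := Submodule.sum_mem _ fun i _ => hmQ i
  -- Step A
  have stepA : ∀ e : ℕ, 1 ≤ e →
      x ∈ (Ideal.span (Set.range fun i => (laurentVar i) ^ e - 1) : Ideal R) • Q := by
    intro e he
    obtain ⟨d, hdD, c, hc⟩ := hDcofinal e he
    have h0 : ∑ i : Fin n, (laurentVar i ^ d) • π (m i) = 0 := by
      have h1 : π (∑ i : Fin n, (laurentVar i ^ d) • m i) = 0 := by
        rw [hπ, Submodule.mkQ_apply]
        exact (Submodule.Quotient.mk_eq_zero N).mpr (h d hdD)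
      rw [map_sum] at h1
      simpa using h1
    have hxeq : x = ∑ i : Fin n, ((1 : R) - laurentVar i ^ d) • π (m i) := by
      rw [hx]
      rw [← sub_zero (∑ i : Fin n, π (m i)), ← h0, ← Finset.sum_sub_distrib]
      congr 1
      ext i
      rw [sub_smul, one_smul]
    rw [hxeq]
    refine Submodule.sum_mem _ fun i _ => ?_
    have hdvd : (laurentVar i) ^ e - 1 ∣ (laurentVar i) ^ d - 1 := by
      rw [hc, pow_mul]
      simpa using sub_dvd_pow_sub_pow ((laurentVar i) ^ e) 1 c
    obtain ⟨t, ht⟩ := hdvd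
    have hmem : (1 : R) - laurentVar i ^ d ∈
        (Ideal.span (Set.range fun i => (laurentVar i) ^ e - 1) : Ideal R) := by
      have h1 : (1 : R) - laurentVar i ^ d = ((laurentVar i) ^ e - 1) * (-t) := by
        rw [mul_neg, ← ht]; ring
      rw [h1]
      exact Ideal.mul_mem_right _ _
        (Ideal.subset_span (Set.mem_range_self i))
    exact Submodule.smul_mem_smul hmem (hmQ i)
  -- Step B : for each maximal ideal, find r outside it killing x
  have hann : ∀ p : Ideal R, p.IsMaximal → ∃ r : R, r ∉ p ∧ r • x = 0 := by
    intro p hp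
    haveI : Finite (R ⧸ p) := hres p hp
    have hxk : ∀ k : ℕ, (⟨x, hxQ⟩ : Q) ∈ (p ^ k • ⊤ : Submodule R Q) := by
      intro k
      haveI : Finite (R ⧸ (p ^ k : Ideal R)) := finite_quot_pow p k
      set S := R ⧸ (p ^ k : Ideal R) with hS
      set E := Nat.card Sˣ with hE
      have hE1 : 1 ≤ E := Nat.card_pos
      have hEi : ∀ i : Fin n, (laurentVar i) ^ E - 1 ∈ (p ^ k : Ideal R) := by
        intro i
        obtain ⟨u, hu⟩ := (hunit i).map (Ideal.Quotient.mk (p ^ k : Ideal R))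
        have h1 : (Ideal.Quotient.mk (p ^ k : Ideal R) (laurentVar i)) ^ E = 1 := by
          rw [← hu, ← Units.val_pow_eq_pow_val, pow_card_eq_one', Units.val_one]
        rw [← Ideal.Quotient.eq_zero_iff_mem, map_sub, map_pow, map_one, h1, sub_self]
      have hle : (Ideal.span (Set.range fun i => (laurentVar i) ^ E - 1) : Ideal R)
          ≤ (p ^ k : Ideal R) := by
        rw [Ideal.span_le]
        rintro _ ⟨i, rfl⟩
        exact hEi i
      have hxmem : x ∈ (p ^ k : Ideal R) • Q :=
        Submodule.smul_mono_left hle (stepA E hE1)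
      exact (Submodule.mem_smul_top_iff _ _ _).mpr hxmem
    have hiInf : (⟨x, hxQ⟩ : Q) ∈ (⨅ k : ℕ, (p ^ k • ⊤ : Submodule R Q)) :=
      Submodule.mem_iInf _ |>.mpr hxk
    obtain ⟨r, hr⟩ := (Ideal.mem_iInf_smul_pow_eq_bot_iff p (⟨x, hxQ⟩ : Q)).mp hiInf
    refine ⟨1 - (r : R), ?_, ?_⟩
    · intro hmem
      have h1 : (1 : R) ∈ p := by
        have := p.add_mem hmem r.2
        simpa using this
      exact hp.ne_top ((Ideal.eq_top_iff_one p).mpr h1)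
    · have hrx : (r : R) • x = x := congrArg Subtype.val hr
      rw [sub_smul, one_smul, hrx, sub_self]
  -- conclude
  have hA : (Submodule.span R {x}).annihilator = ⊤ := by
    by_contra hne
    obtain ⟨p, hmax, hle⟩ := Ideal.exists_le_maximal _ hne
    obtain ⟨r, hrm, hrx⟩ := hann p hmax
    exact hrm (hle ((Submodule.mem_annihilator_span_singleton _ _).mpr hrx))
  have hx0 : x = 0 := by
    have h1 : (1 : R) ∈ (Submodule.span R {x}).annihilator := hA ▸ trivial
    have := (Submodule.mem_annihilator_span_singleton _ _).mp h1
    simpa using this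
  have : π (∑ i : Fin n, m i) = 0 := by
    rw [map_sum]; exact hx0
  rw [hπ, Submodule.mkQ_apply] at this
  exact (Submodule.Quotient.mk_eq_zero N).mp this
end

section
/- Let $k$ be an infinite field and let $\mathbb{F}$ be an arbitrary field. Then the Steinberg representation $\mathrm{St}(\mathrm{GL}_2;\mathbb{F})$ is an irreducible representation of $\mathrm{GL}_2(k)$: it is nonzero, and every $\mathrm{GL}_2(k)$-stable $\mathbb{F}$-subspace of $\mathrm{St}(\mathrm{GL}_2;\mathbb{F})$ is either $0$ or all of $\mathrm{St}(\mathrm{GL}_2;\mathbb{F})$. -/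
abbrev ProjLine (k : Type) [Field k] : Type := Projectivization k (Fin 2 → k)

noncomputable def augmentation (X : Type) (F : Type) [Field F] : (X →₀ F) →ₗ[F] F :=
  Finsupp.linearCombination F (fun _ => (1 : F))

noncomputable def SteinbergGL2 (k F : Type) [Field k] [Field F] :
    Submodule F (ProjLine k →₀ F) :=
  LinearMap.ker (augmentation (ProjLine k) F)

noncomputable def glPoint {k : Type} [Field k] (g : GL (Fin 2) k) :
    ProjLine k → ProjLine k :=
  Projectivization.map
    ((Matrix.GeneralLinearGroup.toLin g).toLinearEquiv :
      (Fin 2 → k) →ₗ[k] (Fin 2 → k))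
    (Matrix.GeneralLinearGroup.toLin g).toLinearEquiv.injective

namespace ProjAux

variable {k : Type} [Field k]

lemma vne (x : k) : (![x, 1] : Fin 2 → k) ≠ 0 := by
  intro h
  have := congrFun h 1
  simp at this

lemma vne' : (![1, 0] : Fin 2 → k) ≠ 0 := by
  intro h
  have := congrFun h 0
  simp at this

noncomputable def pt (x : k) : ProjLine k := Projectivization.mk k ![x, 1] (vne x)

noncomputable def infty : ProjLine k := Projectivization.mk k ![1, 0] vne'

lemma pt_injective : Function.Injective (pt : k → ProjLine k) := by
  intro x y h
  rw [pt, pt, Projectivization.mk_eq_mk_iff] at h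
  obtain ⟨a, ha⟩ := h
  have h1 := congrFun ha 1
  have h0 := congrFun ha 0
  simp [Units.smul_def] at h1 h0
  rw [h1] at h0
  simpa using h0.symm

lemma pt_ne_infty (x : k) : pt x ≠ infty := by
  rw [pt, infty, Ne, Projectivization.mk_eq_mk_iff]
  rintro ⟨a, ha⟩
  have h1 := congrFun ha 1
  simp [Units.smul_def] at h1

lemma point_cases (p : ProjLine k) : p = infty ∨ ∃ x : k, p = pt x := by
  induction p using Projectivization.ind with
  | h v hv =>
    by_cases h1 : v 1 = 0
    · left
      rw [infty, Projectivization.mk_eq_mk_iff]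
      have h0 : v 0 ≠ 0 := by
        intro h0
        apply hv
        funext i
        fin_cases i <;> simp [h0, h1]
      refine ⟨Units.mk0 (v 0) h0, ?_⟩
      funext i
      fin_cases i <;> simp [Units.smul_def, h1]
    · right
      refine ⟨v 0 / v 1, ?_⟩
      rw [pt, Projectivization.mk_eq_mk_iff]
      refine ⟨Units.mk0 (v 1) h1, ?_⟩
      funext i
      fin_cases i <;> simp [Units.smul_def] <;> field_simp

-- glPoint computation
lemma glPoint_mk (g : GL (Fin 2) k) (v : Fin 2 → k) (hv : v ≠ 0) :
    glPoint g (Projectivization.mk k v hv)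
      = Projectivization.mk k ((g : Matrix (Fin 2) (Fin 2) k).mulVec v)
        (by
          intro h
          have h2 : (↑(g⁻¹) : Matrix (Fin 2) (Fin 2) k).mulVec
              ((↑g : Matrix (Fin 2) (Fin 2) k).mulVec v) = 0 := by
            rw [h, Matrix.mulVec_zero]
          rw [Matrix.mulVec_mulVec, ← Units.val_mul, inv_mul_cancel, Units.val_one,
            Matrix.one_mulVec] at h2
          exact hv h2) := by
  rw [glPoint, Projectivization.map_mk, Projectivization.mk_eq_mk_iff]
  refine ⟨1, ?_⟩
  simp [Matrix.GeneralLinearGroup.toLin, LinearMap.GeneralLinearGroup.toLinearEquiv,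
    Units.smul_def]


lemma glPoint_mul (g h : GL (Fin 2) k) (x : ProjLine k) :
    glPoint (g * h) x = glPoint g (glPoint h x) := by
  induction x using Projectivization.ind with
  | h v hv =>
    rw [glPoint_mk, glPoint_mk, glPoint_mk, Projectivization.mk_eq_mk_iff]
    refine ⟨1, ?_⟩
    rw [Units.val_mul, one_smul, Matrix.mulVec_mulVec]

lemma glPoint_one (x : ProjLine k) : glPoint (1 : GL (Fin 2) k) x = x := by
  induction x using Projectivization.ind with
  | h v hv =>
    rw [glPoint_mk, Projectivization.mk_eq_mk_iff]
    exact ⟨1, by rw [Units.val_one, Matrix.one_mulVec, one_smul]⟩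

lemma glPoint_injective (g : GL (Fin 2) k) : Function.Injective (glPoint g) := by
  intro a b hab
  have : ∀ x, glPoint g⁻¹ (glPoint g x) = x := by
    intro x; rw [← glPoint_mul, inv_mul_cancel, glPoint_one]
  rw [← this a, ← this b, hab]

/-- The affine matrix `x ↦ s x + β`. -/
noncomputable def affMat (s β : k) (hs : s ≠ 0) : GL (Fin 2) k :=
  Matrix.GeneralLinearGroup.mkOfDetNeZero !![s, β; (0:k), 1]
    (by rw [Matrix.det_fin_two_of]; simpa using hs)

lemma affMat_coe (s β : k) (hs : s ≠ 0) :
    (affMat s β hs : Matrix (Fin 2) (Fin 2) k) = !![s, β; (0:k), 1] := rfl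

lemma glPoint_affMat_pt (s β : k) (hs : s ≠ 0) (x : k) :
    glPoint (affMat s β hs) (pt x) = pt (s * x + β) := by
  rw [pt, glPoint_mk, pt, Projectivization.mk_eq_mk_iff]
  refine ⟨1, ?_⟩
  rw [one_smul, affMat_coe]
  funext i
  fin_cases i <;> simp [Matrix.mulVec, dotProduct, Fin.sum_univ_two]

lemma glPoint_affMat_infty (s β : k) (hs : s ≠ 0) :
    glPoint (affMat s β hs) infty = infty := by
  rw [infty, glPoint_mk, Projectivization.mk_eq_mk_iff]
  refine ⟨Units.mk0 s hs, ?_⟩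
  rw [affMat_coe]
  funext i
  fin_cases i <;> simp [Matrix.mulVec, dotProduct, Fin.sum_univ_two, Units.smul_def]

lemma rep_indep {v w : Fin 2 → k} (hv : v ≠ 0) (hw : w ≠ 0)
    (hne : Projectivization.mk k v hv ≠ Projectivization.mk k w hw) :
    v 0 * w 1 - w 0 * v 1 ≠ 0 := by
  intro hdet
  apply hne
  rw [Projectivization.mk_eq_mk_iff]
  by_cases h0 : w 0 ≠ 0
  · have hc : v 0 / w 0 ≠ 0 := by
      intro h
      have hv0 : v 0 = 0 := by field_simp at h; simpa using h
      have hv1 : v 1 = 0 := by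
        rw [hv0] at hdet
        have := hdet
        simp at this
        rcases this with h' | h'
        · exact absurd h' h0
        · exact h'
      exact hv (by funext i; fin_cases i <;> simp [hv0, hv1])
    refine ⟨Units.mk0 _ hc, ?_⟩
    funext i
    fin_cases i
    · show v 0 / w 0 * w 0 = v 0
      field_simp
    · show v 0 / w 0 * w 1 = v 1
      rw [div_mul_eq_mul_div, div_eq_iff h0]
      linear_combination hdet
  · push_neg at h0
    have hw1 : w 1 ≠ 0 := by
      intro h1; exact hw (by funext i; fin_cases i <;> simp [h0, h1])
    have hv0 : v 0 = 0 := by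
      rw [h0] at hdet; simp at hdet
      rcases hdet with h' | h'
      · exact h'
      · exact absurd h' hw1
    have hc : v 1 / w 1 ≠ 0 := by
      have hv1 : v 1 ≠ 0 := by
        intro h1; exact hv (by funext i; fin_cases i <;> simp [hv0, h1])
      exact div_ne_zero hv1 hw1
    refine ⟨Units.mk0 _ hc, ?_⟩
    funext i
    fin_cases i <;> simp [Units.smul_def, h0, hv0]
    field_simp

lemma mkOf_coe (A : Matrix (Fin 2) (Fin 2) k) (h : A.det ≠ 0) :
    (Matrix.GeneralLinearGroup.mkOfDetNeZero A h : Matrix (Fin 2) (Fin 2) k) = A := rfl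

lemma trans_pair {p₁ p₂ : ProjLine k} (hne : p₁ ≠ p₂) :
    ∃ g : GL (Fin 2) k, glPoint g infty = p₁ ∧ glPoint g (pt 0) = p₂ := by
  induction p₁ using Projectivization.ind with
  | h v hv =>
  induction p₂ using Projectivization.ind with
  | h w hw =>
    have hdet := rep_indep hv hw hne
    refine ⟨Matrix.GeneralLinearGroup.mkOfDetNeZero !![v 0, w 0; v 1, w 1]
      (by rw [Matrix.det_fin_two_of]; exact hdet), ?_, ?_⟩
    · rw [infty, glPoint_mk, Projectivization.mk_eq_mk_iff]
      refine ⟨1, ?_⟩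
      rw [one_smul, mkOf_coe]
      funext i
      fin_cases i <;> simp [Matrix.mulVec, dotProduct, Fin.sum_univ_two]
    · rw [pt, glPoint_mk, Projectivization.mk_eq_mk_iff]
      refine ⟨1, ?_⟩
      rw [one_smul, mkOf_coe]
      funext i
      fin_cases i <;> simp [Matrix.mulVec, dotProduct, Fin.sum_univ_two]

end ProjAux

section AMA
variable {k F : Type} [Field k] [Field F]

lemma single_one_mul_eq (γ : k) (f : AddMonoidAlgebra F k) :
    AddMonoidAlgebra.single γ (1:F) * f
      = AddMonoidAlgebra.ofCoeff (Finsupp.mapDomain (fun t => γ + t) f.coeff) := by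
  induction f using AddMonoidAlgebra.induction_linear with
  | zero => rw [mul_zero, AddMonoidAlgebra.coeff_zero, Finsupp.mapDomain_zero,
      AddMonoidAlgebra.ofCoeff_zero]
  | add f g hf hg => rw [mul_add, AddMonoidAlgebra.coeff_add, Finsupp.mapDomain_add,
      AddMonoidAlgebra.ofCoeff_add, hf, hg]
  | single a b =>
    rw [AddMonoidAlgebra.single_mul_single, one_mul, AddMonoidAlgebra.coeff_single,
      Finsupp.mapDomain_single, AddMonoidAlgebra.ofCoeff_single]

lemma single_smul_decomp (γ : k) (a : F) (f : AddMonoidAlgebra F k) :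
    AddMonoidAlgebra.single γ a * f = a • (AddMonoidAlgebra.single γ (1:F) * f) := by
  rw [← smul_mul_assoc]
  congr 1
  rw [AddMonoidAlgebra.smul_single, smul_eq_mul, mul_one]

end AMA

section Artin

variable {k : Type} [Field k] [Infinite k]

lemma char_claim {K : Type} [Field K] (ξ : k → K)
    (hmul : ∀ a b, ξ (a + b) = ξ a * ξ b) (hne : ∀ a, ξ a ≠ 0)
    (u₀ : k) (hu : ξ u₀ ≠ 1) :
    ∀ (n : ℕ) (S : Finset k), S.card ≤ n → S.Nonempty →
      ∀ c : k → K, (∀ γ ∈ S, c γ ≠ 0) →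
      ∀ T : Finset k, (∀ s, s ∉ T → ∑ γ ∈ S, c γ * ξ (γ * s) = 0) → False := by
  classical
  intro n
  induction n with
  | zero =>
    intro S hcard hS c hc T hrel
    obtain ⟨γ, hγ⟩ := hS
    have := Finset.card_pos.mpr ⟨γ, hγ⟩
    omega
  | succ n ih =>
    intro S hcard hS c hc T hrel
    rcases lt_or_ge 1 S.card with h2 | h1
    · obtain ⟨γ₁, h₁, γ₂, h₂, hne12⟩ := Finset.one_lt_card.mp h2
      have hsub : γ₁ - γ₂ ≠ 0 := sub_ne_zero.mpr hne12
      set s₀ : k := (γ₁ - γ₂)⁻¹ * u₀ with hs₀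
      have hdiff : (γ₁ - γ₂) * s₀ = u₀ := by
        rw [hs₀, ← mul_assoc, mul_inv_cancel₀ hsub, one_mul]
      have hkey : ξ (γ₁ * s₀) ≠ ξ (γ₂ * s₀) := by
        intro h
        have e : ξ (γ₁ * s₀) = ξ (γ₂ * s₀) * ξ u₀ := by
          rw [← hdiff, ← hmul]; ring_nf
        rw [h] at e
        rcases mul_right_eq_self₀.mp e.symm with h' | h'
        · exact hu h'
        · exact hne _ h'
      set c' : k → K := fun γ => c γ * (ξ (γ * s₀) - ξ (γ₁ * s₀)) with hc'
      set S' : Finset k := (S.erase γ₁).filter (fun γ => c' γ ≠ 0) with hS'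
      have hS'sub : S' ⊆ S.erase γ₁ := Finset.filter_subset _ _
      have hγ₂mem : γ₂ ∈ S' := by
        rw [hS', Finset.mem_filter, Finset.mem_erase]
        refine ⟨⟨(Ne.symm hne12 : γ₂ ≠ γ₁), h₂⟩, ?_⟩
        rw [hc']
        exact mul_ne_zero (hc γ₂ h₂) (sub_ne_zero.mpr (Ne.symm hkey))
      have hcard' : S'.card ≤ n := by
        have := Finset.card_le_card hS'sub
        have := Finset.card_erase_of_mem h₁
        omega
      refine ih S' hcard' ⟨γ₂, hγ₂mem⟩ c'
        (fun γ hγ => (Finset.mem_filter.mp hγ).2) (T ∪ T.image (fun t => t - s₀)) ?_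
      intro s hs
      have hsT : s ∉ T := fun h => hs (Finset.mem_union_left _ h)
      have hsT2 : s + s₀ ∉ T := by
        intro h
        exact hs (Finset.mem_union_right _ (Finset.mem_image.mpr ⟨s + s₀, h, by ring⟩))
      have e1 := hrel _ hsT2
      have e2 := hrel _ hsT
      have hext : ∑ γ ∈ S', c' γ * ξ (γ * s) = ∑ γ ∈ S, c' γ * ξ (γ * s) := by
        refine Finset.sum_subset (hS'sub.trans (Finset.erase_subset _ _)) ?_
        intro x hx hx'
        by_cases hxγ₁ : x = γ₁
        · subst hxγ₁
          have : c' x = 0 := by rw [hc']; simp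
          rw [this, zero_mul]
        · have hxe : x ∈ S.erase γ₁ := Finset.mem_erase.mpr ⟨hxγ₁, hx⟩
          have : ¬ (c' x ≠ 0) := fun hcx => hx' (Finset.mem_filter.mpr ⟨hxe, hcx⟩)
          rw [not_not.mp this, zero_mul]
      rw [hext]
      have expand : ∀ γ ∈ S,
          c' γ * ξ (γ * s) = c γ * ξ (γ * (s + s₀)) - ξ (γ₁ * s₀) * (c γ * ξ (γ * s)) := by
        intro γ _
        have : γ * (s + s₀) = γ * s₀ + γ * s := by ring
        rw [hc', this, hmul]
        ring
      rw [Finset.sum_congr rfl expand, Finset.sum_sub_distrib, e1, ← Finset.mul_sum, e2]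
      ring
    · obtain ⟨γ, hγ⟩ := hS
      have hSe : S = {γ} := by
        apply Finset.eq_singleton_iff_unique_mem.mpr
        refine ⟨hγ, fun x hx => ?_⟩
        by_contra hxγ
        have : 1 < S.card := Finset.one_lt_card.mpr ⟨x, hx, γ, hγ, hxγ⟩
        omega
      obtain ⟨s, hs⟩ := Infinite.exists_notMem_finset T
      have := hrel s hs
      rw [hSe, Finset.sum_singleton] at this
      exact (mul_ne_zero (hc γ hγ) (hne _)) this

variable {F : Type} [Field F]

lemma one_mem_span (y : k →₀ F)
    (hy : y.sum (fun _ a => a) ≠ 0) :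
    (1 : AddMonoidAlgebra F k) ∈ Ideal.span
      {f : AddMonoidAlgebra F k | ∃ s : k, s ≠ 0 ∧ f = AddMonoidAlgebra.ofCoeff (Finsupp.mapDomain (fun t => s * t) y)} := by
  classical
  by_contra hone
  have hnetop : Ideal.span {f : AddMonoidAlgebra F k |
      ∃ s : k, s ≠ 0 ∧ f = AddMonoidAlgebra.ofCoeff (Finsupp.mapDomain (fun t => s * t) y)} ≠ ⊤ :=
    (Ideal.ne_top_iff_one _).mpr hone
  obtain ⟨m, hmax, hle⟩ := Ideal.exists_le_maximal _ hnetop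
  letI : Field (AddMonoidAlgebra F k ⧸ m) := Ideal.Quotient.field m
  set π : AddMonoidAlgebra F k →+* AddMonoidAlgebra F k ⧸ m := Ideal.Quotient.mk m with hπ
  set ξ : k → AddMonoidAlgebra F k ⧸ m := fun γ => π (AddMonoidAlgebra.single γ 1) with hξ
  have hmul : ∀ a b, ξ (a + b) = ξ a * ξ b := by
    intro a b
    rw [hξ]
    simp only [← map_mul, AddMonoidAlgebra.single_mul_single, one_mul]
  have hξ0 : ξ 0 = 1 := by
    rw [hξ]; simp only [← AddMonoidAlgebra.one_def, map_one]
  have hne : ∀ a, ξ a ≠ 0 := by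
    intro a h
    have : ξ a * ξ (-a) = 1 := by rw [← hmul, add_neg_cancel, hξ0]
    rw [h, zero_mul] at this
    exact zero_ne_one this
  set ψ : F →+* AddMonoidAlgebra F k ⧸ m := π.comp (algebraMap F (AddMonoidAlgebra F k)) with hψ
  have hψinj : ∀ a : F, a ≠ 0 → ψ a ≠ 0 := by
    intro a ha h
    have : ψ a * ψ a⁻¹ = 1 := by rw [← map_mul, mul_inv_cancel₀ ha, map_one]
    rw [h, zero_mul] at this
    exact zero_ne_one this
  have hsingle : ∀ (γ : k) (a : F), π (AddMonoidAlgebra.single γ a) = ψ a * ξ γ := by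
    intro γ a
    have : (AddMonoidAlgebra.single γ a : AddMonoidAlgebra F k)
        = algebraMap F (AddMonoidAlgebra F k) a * AddMonoidAlgebra.single γ 1 := by
      rw [← Algebra.smul_def]
      rw [AddMonoidAlgebra.smul_single, smul_eq_mul, mul_one]
    rw [this, map_mul]; rfl
  have hrel : ∀ s : k, s ≠ 0 → ∑ γ ∈ y.support, ψ (y γ) * ξ (γ * s) = 0 := by
    intro s hs
    have hmem : (AddMonoidAlgebra.ofCoeff (Finsupp.mapDomain (fun t => s * t) y) :
        AddMonoidAlgebra F k) ∈ m :=
      hle (Ideal.subset_span ⟨s, hs, rfl⟩)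
    have h0 : π (AddMonoidAlgebra.ofCoeff (Finsupp.mapDomain (fun t => s * t) y)) = 0 :=
      Ideal.Quotient.eq_zero_iff_mem.mpr hmem
    rw [Finsupp.mapDomain, AddMonoidAlgebra.ofCoeff_finsuppSum, map_finsuppSum] at h0
    rw [Finsupp.sum] at h0
    calc ∑ γ ∈ y.support, ψ (y γ) * ξ (γ * s)
        = ∑ γ ∈ y.support, π (AddMonoidAlgebra.single (s * γ) (y γ)) := by
          refine Finset.sum_congr rfl fun γ _ => ?_
          rw [hsingle, mul_comm γ s]
      _ = 0 := h0
  -- now split on triviality of ξ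
  by_cases htriv : ∀ a, ξ a = 1
  · have h1 := hrel 1 one_ne_zero
    have : ∑ γ ∈ y.support, ψ (y γ) * ξ (γ * 1) = ψ (y.sum fun _ a => a) := by
      rw [map_finsuppSum, Finsupp.sum]
      exact Finset.sum_congr rfl fun γ _ => by rw [htriv, mul_one]
    rw [this] at h1
    exact hψinj _ hy h1
  · push_neg at htriv
    obtain ⟨u₀, hu₀⟩ := htriv
    have hSne : y.support.Nonempty := by
      rw [Finsupp.support_nonempty_iff]
      intro h; rw [h] at hy; simp [Finsupp.sum] at hy
    exact char_claim ξ hmul hne u₀ hu₀ y.support.card y.support le_rfl hSne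
      (fun γ => ψ (y γ)) (fun γ hγ => hψinj _ (Finsupp.mem_support_iff.mp hγ)) {0}
      (fun s hs => hrel s (by simpa using hs))

end Artin

open ProjAux in
/-- The Steinberg representation `St(GL₂; F)` of `GL₂(k)` is irreducible when `k` is an
infinite field: it is nonzero, and any `GL₂(k)`-stable `F`-subspace of it is `0` or
everything. -/
theorem stmt5 (k F : Type) [Field k] [Infinite k] [Field F] :
    SteinbergGL2 k F ≠ ⊥ ∧
    ∀ V : Submodule F (ProjLine k →₀ F), V ≤ SteinbergGL2 k F →
      (∀ (g : GL (Fin 2) k), ∀ x ∈ V, Finsupp.mapDomain (glPoint g) x ∈ V) →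
      V = ⊥ ∨ V = SteinbergGL2 k F := by
  classical
  have haugP : ∀ (X : Type) (w : X →₀ F), augmentation X F w = w.sum fun _ a => a := by
    intro X w
    rw [augmentation, Finsupp.linearCombination_apply]
    exact Finsupp.sum_congr (fun a _ => by rw [smul_eq_mul, mul_one])
  have hmapsub : ∀ {X Y : Type} (f : X → Y) (u v : X →₀ F),
      Finsupp.mapDomain f (u - v) = Finsupp.mapDomain f u - Finsupp.mapDomain f v := by
    intro X Y f u v
    have := (Finsupp.lmapDomain F F f).map_sub u v
    simpa [Finsupp.lmapDomain_apply] using this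
  have hpt01 : (pt (0:k) : ProjLine k) ≠ pt 1 := fun h => zero_ne_one (pt_injective h)
  have hd_mem : (Finsupp.single (pt (1:k)) (1:F) - Finsupp.single (pt 0) 1)
      ∈ SteinbergGL2 k F := by
    rw [SteinbergGL2, LinearMap.mem_ker, map_sub, augmentation,
      Finsupp.linearCombination_single, Finsupp.linearCombination_single]
    simp
  have hd_ne : (Finsupp.single (pt (1:k)) (1:F) - Finsupp.single (pt 0) 1) ≠ 0 := by
    intro h
    have h1 := congrArg (fun w : ProjLine k →₀ F => w (pt (1:k))) h
    simp only [Finsupp.sub_apply, Finsupp.single_eq_same, Finsupp.coe_zero, Pi.zero_apply] at h1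
    rw [Finsupp.single_eq_of_ne' hpt01] at h1
    simp at h1
  refine ⟨?_, ?_⟩
  · intro hbot
    rw [hbot, Submodule.mem_bot] at hd_mem
    exact hd_ne hd_mem
  intro V hVle hstab
  by_cases hVbot : V = ⊥
  · exact Or.inl hVbot
  right
  obtain ⟨z, hzV, hzne⟩ : ∃ z ∈ V, z ≠ 0 := by
    by_contra h
    push_neg at h
    exact hVbot ((Submodule.eq_bot_iff V).mpr h)
  obtain ⟨q₁, hq₁⟩ := Finsupp.support_nonempty_iff.mpr hzne
  obtain ⟨p₂, hp₂⟩ : ∃ p₂ : ProjLine k, q₁ ≠ p₂ := by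
    by_cases h0 : q₁ = pt 0
    · exact ⟨pt 1, by rw [h0]; exact hpt01⟩
    · exact ⟨pt 0, h0⟩
  obtain ⟨h₁, hh₁, -⟩ := trans_pair hp₂
  set g₀ : GL (Fin 2) k := h₁⁻¹ with hg₀
  have hg₀q₁ : glPoint g₀ q₁ = infty := by
    rw [hg₀, ← hh₁, ← glPoint_mul, inv_mul_cancel, glPoint_one]
  set z' : ProjLine k →₀ F := Finsupp.mapDomain (glPoint g₀) z with hz'
  have hz'V : z' ∈ V := hstab g₀ z hzV
  set c₁ : F := z' infty with hc₁
  have hc₁ne : c₁ ≠ 0 := by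
    rw [hc₁, hz', ← hg₀q₁, Finsupp.mapDomain_apply (glPoint_injective g₀)]
    exact Finsupp.mem_support_iff.mp hq₁
  have haugz' : augmentation (ProjLine k) F z' = 0 := LinearMap.mem_ker.mp (hVle hz'V)
  set z'' : ProjLine k →₀ F := z' - Finsupp.single infty c₁ with hz''
  have hsupp : ↑z''.support ⊆ Set.range (pt : k → ProjLine k) := by
    intro p hp
    rcases point_cases p with h | ⟨x, rfl⟩
    · subst h
      have := Finsupp.mem_support_iff.mp hp
      rw [hz'', Finsupp.sub_apply, Finsupp.single_eq_same, ← hc₁, sub_self] at this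
      exact absurd rfl this
    · exact ⟨x, rfl⟩
  set y : k →₀ F := Finsupp.comapDomain pt z'' (pt_injective.injOn) with hy
  have hΘy : Finsupp.mapDomain pt y = z'' :=
    Finsupp.mapDomain_comapDomain pt pt_injective z'' hsupp
  have hz'dec : z' = Finsupp.single infty c₁ + Finsupp.mapDomain pt y := by
    rw [hΘy, hz'']; abel
  have haugy : (y.sum fun _ a => a) = -c₁ := by
    have h1 : augmentation k F y = augmentation (ProjLine k) F (Finsupp.mapDomain pt y) := by
      rw [augmentation, augmentation, Finsupp.linearCombination_mapDomain]
      rfl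
    have h2 : augmentation (ProjLine k) F z'' = -c₁ := by
      rw [hz'', map_sub, haugz', augmentation, Finsupp.linearCombination_single]
      simp
    rw [← haugP, h1, hΘy, h2]
  -- the basic family of elements of V
  set W : k → k → (ProjLine k →₀ F) :=
    fun s β => Finsupp.mapDomain pt (Finsupp.mapDomain (fun t => s*t+β) y) with hW
  have hE : ∀ (s β s' β' : k), s ≠ 0 → s' ≠ 0 → W s β - W s' β' ∈ V := by
    have hA : ∀ (s β : k) (hs : s ≠ 0), Finsupp.mapDomain (glPoint (affMat s β hs)) z'
        = Finsupp.single infty c₁ + W s β := by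
      intro s β hs
      rw [hz'dec, Finsupp.mapDomain_add, Finsupp.mapDomain_single, glPoint_affMat_infty,
        show W s β = Finsupp.mapDomain pt (Finsupp.mapDomain (fun t => s*t+β) y) from rfl]
      congr 1
      rw [← Finsupp.mapDomain_comp, ← Finsupp.mapDomain_comp]
      congr 1
      funext t
      exact glPoint_affMat_pt s β hs t
    intro s β s' β' hs hs'
    have h1 := hstab (affMat s β hs) z' hz'V
    have h2 := hstab (affMat s' β' hs') z' hz'V
    rw [hA s β hs] at h1
    rw [hA s' β' hs'] at h2
    have h3 := Submodule.sub_mem V h1 h2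
    simpa using h3
  -- the convolution-ideal stage
  set Y : k → AddMonoidAlgebra F k := fun s => AddMonoidAlgebra.ofCoeff (Finsupp.mapDomain (fun t => s * t) y) with hYdef
  set w₀ : ProjLine k →₀ F := (-c₁)⁻¹ • W 1 0 with hw₀
  set P : AddMonoidAlgebra F k → Prop := fun f =>
    Finsupp.mapDomain pt (f.coeff : k →₀ F) - (augmentation k F (f.coeff : k →₀ F)) • w₀ ∈ V with hP
  have hP0 : P 0 := by
    simp only [hP]
    simp only [AddMonoidAlgebra.coeff_zero, Finsupp.mapDomain_zero, map_zero, zero_smul, sub_zero]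
    exact V.zero_mem
  have hPadd : ∀ f g, P f → P g → P (f + g) := by
    intro f g hf hg
    simp only [hP] at hf hg ⊢
    have heq : Finsupp.mapDomain pt ((f + g).coeff : k →₀ F)
        - (augmentation k F ((f + g : AddMonoidAlgebra F k).coeff : k →₀ F)) • w₀
        = (Finsupp.mapDomain pt (f.coeff : k →₀ F) - (augmentation k F (f.coeff : k →₀ F)) • w₀)
          + (Finsupp.mapDomain pt (g.coeff : k →₀ F) - (augmentation k F (g.coeff : k →₀ F)) • w₀) := by
      rw [AddMonoidAlgebra.coeff_add, Finsupp.mapDomain_add, map_add, add_smul]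
      abel
    rw [heq]
    exact V.add_mem hf hg
  have hPsmulF : ∀ (a : F) f, P f → P (a • f) := by
    intro a f hf
    simp only [hP] at hf ⊢
    have heq : Finsupp.mapDomain pt ((a • f).coeff : k →₀ F)
        - (augmentation k F ((a • f : AddMonoidAlgebra F k).coeff : k →₀ F)) • w₀
        = a • (Finsupp.mapDomain pt (f.coeff : k →₀ F) - (augmentation k F (f.coeff : k →₀ F)) • w₀) := by
      rw [AddMonoidAlgebra.coeff_smul, Finsupp.mapDomain_smul, map_smul, smul_eq_mul]
      module
    rw [heq]
    exact V.smul_mem a hf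
  have haugY : ∀ s : k, augmentation k F ((Y s).coeff : k →₀ F) = -c₁ := by
    intro s
    have h1 : augmentation k F ((Y s).coeff : k →₀ F) = augmentation k F y := by
      rw [show ((Y s).coeff : k →₀ F) = Finsupp.mapDomain (fun t => s * t) y from rfl,
        augmentation, Finsupp.linearCombination_mapDomain]
      rfl
    rw [h1, haugP, haugy]
  have hgen : ∀ s : k, s ≠ 0 → P (Y s) := by
    intro s hs
    simp only [hP]
    rw [haugY s, hw₀, smul_smul, mul_inv_cancel₀ (neg_ne_zero.mpr hc₁ne), one_smul]
    have e1 : Finsupp.mapDomain pt ((Y s).coeff : k →₀ F) = W s 0 := by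
      rw [show ((Y s).coeff : k →₀ F) = Finsupp.mapDomain (fun t => s * t) y from rfl,
        show W s 0 = Finsupp.mapDomain pt (Finsupp.mapDomain (fun t => s*t+0) y) from rfl]
      congr 2
      funext t
      ring
    have e2 : (W 1 0 : ProjLine k →₀ F)
        = Finsupp.mapDomain pt (Finsupp.mapDomain (fun t => 1*t+0) y) := rfl
    rw [e1]
    exact hE s 0 1 0 hs one_ne_zero
  have hPsingle : ∀ (γ : k) (f : AddMonoidAlgebra F k),
      P f → P (AddMonoidAlgebra.single γ (1:F) * f) := by
    intro γ f hf
    simp only [hP] at hf ⊢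
    rw [single_one_mul_eq, AddMonoidAlgebra.coeff_ofCoeff]
    set g : GL (Fin 2) k := affMat 1 γ one_ne_zero with hgdef
    have hcomp : Finsupp.mapDomain pt (Finsupp.mapDomain (fun t => γ + t) f.coeff : k →₀ F)
        = Finsupp.mapDomain (glPoint g) (Finsupp.mapDomain pt (f.coeff : k →₀ F)) := by
      rw [← Finsupp.mapDomain_comp, ← Finsupp.mapDomain_comp]
      congr 1
      funext t
      show pt (γ + t) = glPoint g (pt t)
      rw [hgdef, glPoint_affMat_pt]
      congr 1
      ring
    have haug2 : augmentation k F (Finsupp.mapDomain (fun t => γ + t) (f.coeff : k →₀ F))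
        = augmentation k F (f.coeff : k →₀ F) := by
      rw [augmentation, Finsupp.linearCombination_mapDomain]
      rfl
    rw [hcomp, haug2]
    have hwmem : Finsupp.mapDomain (glPoint g) w₀ - w₀ ∈ V := by
      rw [hw₀, Finsupp.mapDomain_smul, ← smul_sub]
      apply V.smul_mem
      have hW1γ : Finsupp.mapDomain (glPoint g) (W 1 0) = W 1 γ := by
        rw [show W 1 0 = Finsupp.mapDomain pt (Finsupp.mapDomain (fun t => 1*t+0) y) from rfl,
          show W 1 γ = Finsupp.mapDomain pt (Finsupp.mapDomain (fun t => 1*t+γ) y) from rfl,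
          ← Finsupp.mapDomain_comp, ← Finsupp.mapDomain_comp, ← Finsupp.mapDomain_comp]
        congr 1
        funext t
        show glPoint g (pt (1*t+0)) = pt (1*t+γ)
        rw [hgdef, glPoint_affMat_pt]
        congr 1
        ring
      rw [hW1γ]
      exact hE 1 γ 1 0 one_ne_zero one_ne_zero
    have key : Finsupp.mapDomain (glPoint g) (Finsupp.mapDomain pt (f.coeff : k →₀ F))
          - (augmentation k F (f.coeff : k →₀ F)) • w₀
        = Finsupp.mapDomain (glPoint g)
            (Finsupp.mapDomain pt (f.coeff : k →₀ F) - (augmentation k F (f.coeff : k →₀ F)) • w₀)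
          + (augmentation k F (f.coeff : k →₀ F)) • (Finsupp.mapDomain (glPoint g) w₀ - w₀) := by
      rw [hmapsub, Finsupp.mapDomain_smul, smul_sub]
      abel
    rw [key]
    exact V.add_mem (hstab g _ hf) (V.smul_mem _ hwmem)
  have hPmul : ∀ (r f : AddMonoidAlgebra F k), P f → P (r * f) := by
    intro r f hf
    induction r using AddMonoidAlgebra.induction_linear with
    | zero => rw [zero_mul]; exact hP0
    | add a b ha hb => rw [add_mul]; exact hPadd _ _ ha hb
    | single a b =>
      rw [single_smul_decomp]
      exact hPsmulF _ _ (hPsingle a f hf)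
  have hspan1 := one_mem_span y (by rw [haugy]; exact neg_ne_zero.mpr hc₁ne)
  have hP1 : P 1 := by
    have hsubset : {f : AddMonoidAlgebra F k |
        ∃ s : k, s ≠ 0 ∧ f = AddMonoidAlgebra.ofCoeff (Finsupp.mapDomain (fun t => s * t) y)} ⊆ {f | P f} := by
      rintro x ⟨s, hs, rfl⟩
      exact hgen s hs
    refine Submodule.span_induction (p := fun f _ => P f) ?_ hP0 ?_ ?_ hspan1
    · intro x hx
      exact hsubset hx
    · intro a b _ _ ha hb
      exact hPadd a b ha hb
    · intro a x _ hx
      rw [smul_eq_mul]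
      exact hPmul a x hx
  have hdelta : ∀ γ : k, Finsupp.single (pt γ) (1:F) - w₀ ∈ V := by
    intro γ
    have h := hPsingle γ 1 hP1
    rw [mul_one] at h
    simp only [hP] at h
    rw [AddMonoidAlgebra.coeff_single,
      Finsupp.mapDomain_single, augmentation, Finsupp.linearCombination_single] at h
    simpa using h
  have hdiff01 : Finsupp.single (pt (1:k)) (1:F) - Finsupp.single (pt 0) 1 ∈ V := by
    have h := V.sub_mem (hdelta 1) (hdelta 0)
    simpa using h
  have hdiffgen : ∀ p q : ProjLine k, p ≠ q →
      Finsupp.single p (1:F) - Finsupp.single q 1 ∈ V := by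
    intro p q hpq
    obtain ⟨gP, hgP1, hgP2⟩ := trans_pair hpq
    obtain ⟨gB, hgB1, hgB2⟩ := trans_pair (Ne.symm hpt01)
    set g := gP * gB⁻¹ with hgdef2
    have hb1 : glPoint gB⁻¹ (pt (1:k)) = infty := by
      apply glPoint_injective gB
      rw [← glPoint_mul, mul_inv_cancel, glPoint_one, hgB1]
    have hb2 : glPoint gB⁻¹ (pt (0:k)) = pt 0 := by
      apply glPoint_injective gB
      rw [← glPoint_mul, mul_inv_cancel, glPoint_one, hgB2]
    have h1 : glPoint g (pt (1:k)) = p := by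
      rw [hgdef2, glPoint_mul, hb1, hgP1]
    have h2 : glPoint g (pt (0:k)) = q := by
      rw [hgdef2, glPoint_mul, hb2, hgP2]
    have h3 := hstab g _ hdiff01
    rw [hmapsub, Finsupp.mapDomain_single, Finsupp.mapDomain_single, h1, h2] at h3
    exact h3
  have hge : SteinbergGL2 k F ≤ V := by
    intro x hx
    have haugx : (x.sum fun _ a => a) = 0 := by
      rw [← haugP]
      exact LinearMap.mem_ker.mp hx
    have hrepr : x = ∑ p ∈ x.support,
        x p • (Finsupp.single p (1:F) - Finsupp.single (pt 0) 1) := by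
      rw [Finset.sum_congr rfl (fun p _ => smul_sub (x p) _ _), Finset.sum_sub_distrib]
      have e1 : ∑ p ∈ x.support, x p • Finsupp.single p (1:F) = x := by
        conv_rhs => rw [← Finsupp.sum_single x]
        rw [Finsupp.sum]
        exact Finset.sum_congr rfl fun p _ => by rw [Finsupp.smul_single, smul_eq_mul, mul_one]
      have e2 : ∑ p ∈ x.support, x p • (Finsupp.single (pt (0:k)) (1:F)) = 0 := by
        rw [← Finset.sum_smul]
        rw [show (∑ p ∈ x.support, x p) = (x.sum fun _ a => a) from rfl, haugx, zero_smul]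
      rw [e1, e2, sub_zero]
    rw [hrepr]
    apply Submodule.sum_mem
    intro p _
    by_cases hp : p = pt 0
    · rw [hp, sub_self, smul_zero]
      exact V.zero_mem
    · exact V.smul_mem _ (hdiffgen p (pt 0) hp)
  exact le_antisymm hVle hge
end

section
/- Let $k$ be an infinite field and let $\mathbb{F}$ be a field. Let $\mathbb{F}[k]$ denote the group algebra over $\mathbb{F}$ of the additive group $(k,+)$. For $t \in k^{\times}$, let $\sigma_t$ be the $\mathbb{F}$-algebra automorphism of $\mathbb{F}[k]$ induced by the group automorphism $\lambda \mapsto t\lambda$ of $(k,+)$. Let $I \subseteq \mathbb{F}[k]$ be an ideal such that $\sigma_t(I) \subseteq I$ for all $t \in k^{\times}$ and such that $I$ is not contained in the augmentation ideal. Then $I = \mathbb{F}[k]$. -/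
theorem lemB {k L : Type} [Field k] [Infinite k] [Field L] (χ : k → L)
    (hmul : ∀ a b, χ (a + b) = χ a * χ b) (h0 : χ 0 = 1)
    (a0 : k) (ha0 : χ a0 ≠ 1) :
    ∀ (S : Finset k) (d : k → L) (T : Finset k),
      (∀ t ∉ T, ∑ l ∈ S, d l * χ (t * l) = 0) → ∀ μ ∈ S, d μ = 0 := by
  classical
  have hne : ∀ a, χ a ≠ 0 := by
    intro a h
    have : χ (a + (-a)) = 0 := by rw [hmul, h, zero_mul]
    rw [add_neg_cancel, h0] at this
    exact one_ne_zero this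
  intro S
  induction S using Finset.strongInduction with
  | _ S IH =>
    intro d T hT μ hμ
    by_cases hex : ∃ l ∈ S, l ≠ μ
    · obtain ⟨l', hl'S, hl'⟩ := hex
      set u : k := a0 * (μ - l')⁻¹ with hu
      have huml : u * μ - u * l' = a0 := by
        rw [← mul_sub, hu]
        field_simp [sub_ne_zero.mpr (Ne.symm hl')]
      have hsep : χ (u * μ) ≠ χ (u * l') := by
        have heq : u * μ = u * l' + a0 := by rw [← huml]; ring
        rw [heq, hmul]
        intro h
        exact ha0 (mul_left_cancel₀ (hne (u * l')) (h.trans (mul_one _).symm))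
      set d' : k → L := fun l => d l * (χ (u * l) - χ (u * l')) with hd'
      set T' : Finset k := T ∪ T.image (fun t => t - u) with hT'
      have key : ∀ t ∉ T', ∑ l ∈ S.erase l', d' l * χ (t * l) = 0 := by
        intro t ht
        have ht1 : t ∉ T := fun h => ht (Finset.mem_union_left _ h)
        have ht2 : t + u ∉ T := by
          intro h
          exact ht (Finset.mem_union_right _ (Finset.mem_image.mpr ⟨t + u, h, by ring⟩))
        have hz : d' l' * χ (t * l') = 0 := by simp [hd']
        have hst : ∑ l ∈ S.erase l', d' l * χ (t * l)
            = ∑ l ∈ S, d' l * χ (t * l) := by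
          rw [← Finset.sum_erase_add S _ hl'S, hz, add_zero]
        rw [hst]
        have expand : ∀ l, d' l * χ (t * l)
            = d l * χ ((t + u) * l) - χ (u * l') * (d l * χ (t * l)) := by
          intro l
          have : χ ((t + u) * l) = χ (t * l) * χ (u * l) := by
            rw [add_mul, hmul]
          rw [this, hd']; ring
        simp only [expand]
        rw [Finset.sum_sub_distrib, ← Finset.mul_sum, hT _ ht2, hT t ht1, mul_zero, sub_zero]
      have hz := IH (S.erase l') (Finset.erase_ssubset hl'S) d' T' key μ
        (Finset.mem_erase.mpr ⟨Ne.symm hl', hμ⟩)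
      exact (mul_eq_zero.mp hz).resolve_right (sub_ne_zero.mpr hsep)
    · push_neg at hex
      have hS : S = {μ} := Finset.Subset.antisymm
        (fun l hl => Finset.mem_singleton.mpr (hex l hl))
        (Finset.singleton_subset_iff.mpr hμ)
      obtain ⟨t, ht⟩ := Infinite.exists_notMem_finset T
      have := hT t ht
      rw [hS, Finset.sum_singleton] at this
      exact (mul_eq_zero.mp this).resolve_right (hne _)

theorem stmt6 (k : Type) [Field k] [Infinite k] (F : Type) [Field F]
    (I : Ideal (AddMonoidAlgebra F k))
    (hstab : ∀ t : kˣ, ∀ x ∈ I,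
      (AddMonoidAlgebra.ofCoeff (Finsupp.mapDomain (fun lam : k => (t : k) * lam) x.coeff) : AddMonoidAlgebra F k) ∈ I)
    (hne : ∃ x ∈ I, (Finsupp.sum x.coeff fun _ c => c) ≠ 0) :
    I = ⊤ := by
  classical
  by_contra hI
  obtain ⟨m, hm, hIm⟩ := Ideal.exists_le_maximal I hI
  haveI := hm
  letI : Field (AddMonoidAlgebra F k ⧸ m) := Ideal.Quotient.field m
  let π : AddMonoidAlgebra F k →+* AddMonoidAlgebra F k ⧸ m := Ideal.Quotient.mk m
  let χ : k → AddMonoidAlgebra F k ⧸ m :=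
    fun a => π (AddMonoidAlgebra.single a (1 : F))
  let ι : F →+* AddMonoidAlgebra F k ⧸ m := π.comp (algebraMap F (AddMonoidAlgebra F k))
  have halg : ∀ c : F, algebraMap F (AddMonoidAlgebra F k) c
      = AddMonoidAlgebra.single (0 : k) c := by
    intro c
    rw [AddMonoidAlgebra.coe_algebraMap]
    simp
  have hιs : ∀ (a : k) (c : F), π (AddMonoidAlgebra.single a c) = ι c * χ a := by
    intro a c
    have h1 : (AddMonoidAlgebra.single a c : AddMonoidAlgebra F k)
        = AddMonoidAlgebra.single (0 : k) c * AddMonoidAlgebra.single a (1 : F) := by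
      rw [AddMonoidAlgebra.single_mul_single, zero_add, mul_one]
    rw [h1, ← halg, map_mul]
    rfl
  have hmul : ∀ a b, χ (a + b) = χ a * χ b := by
    intro a b
    show π _ = π _ * π _
    rw [← map_mul, AddMonoidAlgebra.single_mul_single, one_mul]
  have h0 : χ 0 = 1 := by
    show π (AddMonoidAlgebra.single (0 : k) (1 : F)) = 1
    rw [← AddMonoidAlgebra.one_def, map_one]
  have hιinj : Function.Injective ι := ι.injective
  obtain ⟨x, hxI, hs⟩ := hne
  have hmap : ∀ t : k, π (AddMonoidAlgebra.ofCoeff (Finsupp.mapDomain (fun lam : k => t * lam) x.coeff))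
      = ∑ l ∈ x.coeff.support, ι (x.coeff l) * χ (t * l) := by
    intro t
    rw [Finsupp.mapDomain, Finsupp.sum, AddMonoidAlgebra.ofCoeff_sum, map_sum]
    exact Finset.sum_congr rfl fun l _ => hιs _ _
  have hvan : ∀ t : k, t ∉ ({0} : Finset k) →
      ∑ l ∈ x.coeff.support, ι (x.coeff l) * χ (t * l) = 0 := by
    intro t ht
    rw [Finset.mem_singleton] at ht
    rw [← hmap t]
    exact Ideal.Quotient.eq_zero_iff_mem.mpr
      (hIm (hstab (Units.mk0 t ht) x hxI))
  by_cases hχ : ∃ a0, χ a0 ≠ 1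
  · obtain ⟨a0, ha0⟩ := hχ
    have hall := lemB χ hmul h0 a0 ha0 x.coeff.support (fun l => ι (x.coeff l)) {0} hvan
    have hsupp : x.coeff.support.Nonempty := by
      rw [Finsupp.support_nonempty_iff]
      intro h
      exact hs (by simp [h, Finsupp.sum])
    obtain ⟨μ, hμ⟩ := hsupp
    exact (Finsupp.mem_support_iff.mp hμ) (hιinj (by rw [show ι (x.coeff μ) = 0 from hall μ hμ, map_zero]))
  · push_neg at hχ
    have h1 := hvan 1 (by simp)
    have h2 : ∑ l ∈ x.coeff.support, ι (x.coeff l) * χ (1 * l)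
        = ι (Finsupp.sum x.coeff fun _ c => c) := by
      rw [Finsupp.sum, map_sum]
      exact Finset.sum_congr rfl fun l _ => by rw [hχ, mul_one]
    rw [h2] at h1
    exact hs (hιinj (by rw [h1, map_zero]))
end

section
/- Let $p$ be a prime, let $\Gamma$ be a group all of whose finitely generated subgroups are finite $p$-groups, and let $\mathbb{F}$ be a field of characteristic $p$. Let $I$ be a left ideal of the group algebra $\mathbb{F}[\Gamma]$ that is not contained in the augmentation ideal. Then $I = \mathbb{F}[\Gamma]$. -/
open MonoidAlgebra

/-- Key lemma: in the group algebra of a finite `p`-group over a field of characteristic `p`,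
any element with nonzero augmentation has a left inverse. -/
lemma key_left_inv (p : ℕ) (hp : p.Prime) (G : Type) [Group G] [Finite G]
    (hG : IsPGroup p G) (F : Type) [Field F] [CharP F p]
    (x : MonoidAlgebra F G) (hx : (Finsupp.sum x.coeff fun _ c => c) ≠ 0) :
    ∃ u : MonoidAlgebra F G, u * x = 1 := by
  classical
  haveI : Fact p.Prime := ⟨hp⟩
  set εa : MonoidAlgebra F G →ₐ[F] F := (MonoidAlgebra.lift F F G) 1 with hεa
  have hεsum : ∀ z : MonoidAlgebra F G, εa z = Finsupp.sum z.coeff fun _ c => c := by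
    intro z
    rw [hεa, MonoidAlgebra.lift_apply]
    simp
  by_cases htop : Ideal.span {x} = (⊤ : Ideal (MonoidAlgebra F G))
  · have h1 : (1 : MonoidAlgebra F G) ∈ Ideal.span {x} := htop ▸ Submodule.mem_top
    obtain ⟨u, hu⟩ := Submodule.mem_span_singleton.mp h1
    exact ⟨u, by rwa [smul_eq_mul] at hu⟩
  · exfalso
    obtain ⟨m, hm, hxm⟩ := Ideal.exists_le_maximal _ htop
    haveI : IsSimpleModule (MonoidAlgebra F G) (MonoidAlgebra F G ⧸ m) :=
      isSimpleModule_iff_isCoatom.mpr hm.out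
    have hp2M : ∀ mm : MonoidAlgebra F G ⧸ m, p • mm = 0 := by
      intro mm
      have hpB : ((p : ℕ) : MonoidAlgebra F G) = 0 := by
        rw [← map_natCast (algebraMap F (MonoidAlgebra F G)) p, CharP.cast_eq_zero F p, map_zero]
      rw [← Nat.cast_smul_eq_nsmul (MonoidAlgebra F G) p mm, hpB, zero_smul]
    haveI : Module (ZMod p) (MonoidAlgebra F G ⧸ m) := AddCommGroup.zmodModule hp2M
    set m₁ : MonoidAlgebra F G ⧸ m := Submodule.Quotient.mk 1 with hm₁def
    have hm₁ : m₁ ≠ 0 := by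
      rw [hm₁def, Ne, Submodule.Quotient.mk_eq_zero]
      exact fun h => hm.ne_top ((Ideal.eq_top_iff_one m).mpr h)
    set O : Set (MonoidAlgebra F G ⧸ m) := Set.range fun g : G => (MonoidAlgebra.of F G g) • m₁ with hO
    set W : Submodule (ZMod p) (MonoidAlgebra F G ⧸ m) := Submodule.span (ZMod p) O with hW
    have hsmulW : ∀ (g : G) (w : MonoidAlgebra F G ⧸ m), w ∈ W → (MonoidAlgebra.of F G g) • w ∈ W := by
      intro g w hw
      induction hw using Submodule.span_induction with
      | mem w hw =>
        obtain ⟨h, rfl⟩ := hw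
        apply Submodule.subset_span
        refine ⟨g * h, ?_⟩
        show (MonoidAlgebra.of F G (g * h)) • m₁
          = (MonoidAlgebra.of F G g) • ((MonoidAlgebra.of F G h) • m₁)
        rw [map_mul, mul_smul]
      | zero => rw [smul_zero]; exact W.zero_mem
      | add w₁ w₂ _ _ ih₁ ih₂ => rw [smul_add]; exact W.add_mem ih₁ ih₂
      | smul c w _ ih =>
        have hcomm := ZMod.map_smul
          (DistribMulAction.toAddMonoidHom (MonoidAlgebra F G ⧸ m) ((MonoidAlgebra.of F G g : MonoidAlgebra F G))) c w
        simp only [DistribMulAction.toAddMonoidHom_apply] at hcomm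
        rw [hcomm]
        exact W.smul_mem c ih
    letI : MulAction G (↥W) :=
      { smul := fun g w => ⟨(MonoidAlgebra.of F G g) • (w : MonoidAlgebra F G ⧸ m), hsmulW g w w.2⟩
        one_smul := fun w => by
          apply Subtype.ext
          show (MonoidAlgebra.of F G 1) • (w : MonoidAlgebra F G ⧸ m) = w
          rw [map_one, one_smul]
        mul_smul := fun g h w => by
          apply Subtype.ext
          show (MonoidAlgebra.of F G (g * h)) • (w : MonoidAlgebra F G ⧸ m)
            = (MonoidAlgebra.of F G g) • ((MonoidAlgebra.of F G h) • (w : MonoidAlgebra F G ⧸ m))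
          rw [map_mul, mul_smul] }
    haveI : Module.Finite (ZMod p) W := Module.Finite.span_of_finite _ (Set.finite_range _)
    haveI : Finite W := Module.finite_of_finite (ZMod p)
    have hm₁W : m₁ ∈ W := by
      apply Submodule.subset_span
      refine ⟨1, ?_⟩
      show (MonoidAlgebra.of F G 1) • m₁ = m₁
      rw [map_one, one_smul]
    haveI : Nontrivial W := ⟨⟨⟨m₁, hm₁W⟩, 0, by simp [Subtype.ext_iff, hm₁]⟩⟩
    have hdvd : p ∣ Nat.card W := by
      haveI : NeZero p := ⟨hp.pos.ne'⟩
      haveI : Fintype W := Fintype.ofFinite _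
      have hcard := Module.card_eq_pow_finrank (K := ZMod p) (V := W)
      rw [ZMod.card] at hcard
      rcases Nat.eq_zero_or_pos (Module.finrank (ZMod p) (↥W)) with h0 | hpos
      · rw [h0, pow_zero] at hcard
        exact absurd hcard Fintype.one_lt_card.ne'
      · rw [Nat.card_eq_fintype_card, hcard]
        exact dvd_pow_self p hpos.ne'
    have h0fix : (0 : W) ∈ MulAction.fixedPoints G W := by
      intro g
      apply Subtype.ext
      show (MonoidAlgebra.of F G g) • ((0 : W) : MonoidAlgebra F G ⧸ m) = ((0 : W) : MonoidAlgebra F G ⧸ m)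
      simp
    obtain ⟨b, hbfix, hb0⟩ := hG.exists_fixed_point_of_prime_dvd_card_of_fixed_point (↥W) hdvd h0fix
    have hb' : (b : MonoidAlgebra F G ⧸ m) ≠ 0 := by
      intro h
      exact hb0 (Subtype.ext (by simpa using h.symm))
    have hfix : ∀ g : G, (MonoidAlgebra.of F G g) • (b : MonoidAlgebra F G ⧸ m) = (b : MonoidAlgebra F G ⧸ m) := by
      intro g
      have := hbfix g
      exact congrArg Subtype.val this
    -- key computation: y • b = single 1 (εa y) • b
    have haux : ∀ y : MonoidAlgebra F G,
        y • (b : MonoidAlgebra F G ⧸ m) = (MonoidAlgebra.single (1 : G) (εa y)) • (b : MonoidAlgebra F G ⧸ m) := by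
      intro y
      conv_lhs => rw [← MonoidAlgebra.sum_coeff_single y]
      rw [Finsupp.sum, Finset.sum_smul]
      have hterm : ∀ g ∈ y.coeff.support,
          (MonoidAlgebra.single g (y.coeff g)) • (b : MonoidAlgebra F G ⧸ m)
            = (MonoidAlgebra.single (1 : G) (y.coeff g)) • (b : MonoidAlgebra F G ⧸ m) := by
        intro g _
        have h1 : (MonoidAlgebra.single g (y.coeff g) : MonoidAlgebra F G)
            = MonoidAlgebra.single (1 : G) (y.coeff g) * MonoidAlgebra.of F G g := by
          rw [MonoidAlgebra.of_apply, MonoidAlgebra.single_mul_single, one_mul, mul_one]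
        rw [h1, mul_smul, hfix]
      rw [Finset.sum_congr rfl hterm, ← Finset.sum_smul, hεsum, Finsupp.sum]
      exact congrArg (· • _) (map_sum (MonoidAlgebra.singleAddHom (1 : G) (R := F)) _ _).symm
    have hspan : Submodule.span (MonoidAlgebra F G) {(b : MonoidAlgebra F G ⧸ m)} = ⊤ := by
      rcases eq_bot_or_eq_top (Submodule.span (MonoidAlgebra F G) {(b : MonoidAlgebra F G ⧸ m)}) with h | h
      · exfalso
        apply hb'
        have : (b : MonoidAlgebra F G ⧸ m) ∈ Submodule.span (MonoidAlgebra F G) {(b : MonoidAlgebra F G ⧸ m)} :=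
          Submodule.mem_span_singleton_self _
        rw [h] at this
        simpa using this
      · exact h
    have hmem : m₁ ∈ Submodule.span (MonoidAlgebra F G) {(b : MonoidAlgebra F G ⧸ m)} := hspan ▸ Submodule.mem_top
    obtain ⟨y, hy⟩ := Submodule.mem_span_singleton.mp hmem
    have hεy : εa y ≠ 0 := by
      intro h
      apply hm₁
      rw [← hy, haux y, h]
      simp
    have hxmem : x ∈ m := hxm (Ideal.subset_span (Set.mem_singleton x))
    have hzero : (x * y) • (b : MonoidAlgebra F G ⧸ m) = 0 := by
      rw [mul_smul, hy, hm₁def, ← Submodule.Quotient.mk_smul, smul_eq_mul, mul_one,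
        Submodule.Quotient.mk_eq_zero]
      exact hxmem
    have hεxy : εa (x * y) ≠ 0 := by
      rw [map_mul]
      exact mul_ne_zero (by rw [hεsum]; exact hx) hεy
    apply hb'
    have hzero' : (MonoidAlgebra.single (1 : G) (εa (x * y))) • (b : MonoidAlgebra F G ⧸ m) = 0 := by
      rw [← haux, hzero]
    calc (b : MonoidAlgebra F G ⧸ m) = (1 : MonoidAlgebra F G) • (b : MonoidAlgebra F G ⧸ m) := (one_smul _ _).symm
      _ = (MonoidAlgebra.single (1 : G) ((εa (x * y))⁻¹ * εa (x * y))) • (b : MonoidAlgebra F G ⧸ m) := by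
          rw [inv_mul_cancel₀ hεxy, MonoidAlgebra.one_def]
      _ = (MonoidAlgebra.single (1 : G) (εa (x * y))⁻¹
            * MonoidAlgebra.single (1 : G) (εa (x * y))) • (b : MonoidAlgebra F G ⧸ m) := by
          rw [MonoidAlgebra.single_mul_single, one_mul]
      _ = (MonoidAlgebra.single (1 : G) (εa (x * y))⁻¹) • 0 := by
          rw [mul_smul, hzero']
      _ = 0 := smul_zero _

theorem stmt9 (p : ℕ) (hp : p.Prime) (Γ : Type) [Group Γ]
    (hΓ : ∀ S : Finset Γ, Finite (Subgroup.closure (S : Set Γ)) ∧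
      IsPGroup p (Subgroup.closure (S : Set Γ)))
    (F : Type) [Field F] [CharP F p]
    (I : Ideal (MonoidAlgebra F Γ))
    (hne : ∃ x ∈ I, (Finsupp.sum x.coeff fun _ c => c) ≠ 0) :
    I = ⊤ := by
  classical
  obtain ⟨x, hxI, hx⟩ := hne
  set G := Subgroup.closure ((x.coeff.support : Finset Γ) : Set Γ) with hG
  obtain ⟨hfin, hpG⟩ := hΓ x.coeff.support
  haveI : Finite G := hfin
  set φ : MonoidAlgebra F G →+* MonoidAlgebra F Γ :=
    MonoidAlgebra.mapDomainRingHom F G.subtype with hφ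
  -- construct a preimage of x
  set x' : MonoidAlgebra F G :=
    ∑ g ∈ x.coeff.support.attach,
      MonoidAlgebra.single (⟨(g : Γ), Subgroup.subset_closure g.2⟩ : G) (x.coeff g) with hx'
  have hφx : φ x' = x := by
    rw [hx', map_sum]
    have : ∀ g ∈ x.coeff.support.attach,
        φ (MonoidAlgebra.single (⟨(g : Γ), Subgroup.subset_closure g.2⟩ : G) (x.coeff g))
          = MonoidAlgebra.single (g : Γ) (x.coeff g) := by
      intro g _
      rw [hφ]
      simp [MonoidAlgebra.mapDomainRingHom, MonoidAlgebra.mapDomain_single]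
    rw [Finset.sum_congr rfl this, Finset.sum_attach x.coeff.support (fun g => MonoidAlgebra.single g (x.coeff g))]
    exact MonoidAlgebra.sum_coeff_single x
  have hεx' : (Finsupp.sum x'.coeff fun _ c => c) ≠ 0 := by
    have : (Finsupp.sum (φ x').coeff fun _ c => c) = Finsupp.sum x'.coeff fun _ c => c := by
      rw [hφ]
      show (Finsupp.sum (Finsupp.mapDomain (⇑G.subtype) x'.coeff) fun _ c => c)
        = Finsupp.sum x'.coeff fun _ c => c
      exact Finsupp.sum_mapDomain_index (fun _ => rfl) (fun _ _ _ => rfl)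
    rw [← this, hφx]
    exact hx
  obtain ⟨u', hu'⟩ := key_left_inv p hp G hpG F x' hεx'
  have h1 : φ u' * x = 1 := by
    rw [← hφx, ← map_mul, hu', map_one]
  have h1I : (1 : MonoidAlgebra F Γ) ∈ I := by
    have := I.smul_mem (φ u') hxI
    rwa [smul_eq_mul, h1] at this
  exact (Ideal.eq_top_iff_one I).mpr h1I
end

section
/- Let $k$ be an infinite field of positive characteristic $p$. Let $f_1,\ldots,f_r \colon k \to \mathbb{F}_p$ be A-polynomials on $k$ such that $f_i(0) = 0$ for $1 \leq i \leq r$, and let $\mathfrak{a}$ be an infinite additive subgroup of $k$. Then there exists a nonzero $a \in \mathfrak{a}$ such that $f_i(a) = 0$ for all $1 \leq i \leq r$. -/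
open MvPolynomial

section aux

variable {k : Type} [Field k] {p : ℕ} [CharP k p]

lemma cast_eq_natCast [NeZero p] (m : ZMod p) :
    ZMod.castHom (dvd_refl p) k m = ((m.val : ℕ) : k) := by
  rw [← map_natCast (ZMod.castHom (dvd_refl p) k) m.val, ZMod.natCast_val, ZMod.cast_id]

lemma lam_mul_cast [NeZero p] (lam : k →+ ZMod p) (x : k) (m : ZMod p) :
    lam (x * ZMod.castHom (dvd_refl p) k m) = lam x * m := by
  have h1 := cast_eq_natCast (k := k) m
  have h2 : x * ((m.val : ℕ) : k) = m.val • x := by rw [nsmul_eq_mul, mul_comm]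
  have h3 : (m.val : ZMod p) = m := by rw [ZMod.natCast_val, ZMod.cast_id]
  rw [h1, h2, map_nsmul, nsmul_eq_mul, h3, mul_comm]

lemma key_poly [NeZero p] (N : ℕ) (a : Fin N → k) (φ : Polynomial k) (lam : k →+ ZMod p) :
    ∃ P : MvPolynomial (Fin N) (ZMod p), P.totalDegree ≤ φ.natDegree ∧
      ∀ n : Fin N → ZMod p,
        MvPolynomial.eval n P
          = lam (Polynomial.eval (∑ j, ZMod.castHom (dvd_refl p) k (n j) * a j) φ) := by
  set c := ZMod.castHom (dvd_refl p) k with hc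
  set L : MvPolynomial (Fin N) k := ∑ j, MvPolynomial.C (a j) * MvPolynomial.X j with hL
  set Q : MvPolynomial (Fin N) k := Polynomial.aeval L φ with hQ
  have hLdeg : L.totalDegree ≤ 1 := by
    refine le_trans (totalDegree_finset_sum _ _) ?_
    apply Finset.sup_le; intro j _
    refine le_trans (totalDegree_mul _ _) ?_
    simp [totalDegree_C, totalDegree_X]
  have hQdeg : Q.totalDegree ≤ φ.natDegree := by
    rw [hQ, Polynomial.aeval_eq_sum_range]
    refine le_trans (totalDegree_finset_sum _ _) ?_
    apply Finset.sup_le; intro i hi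
    rw [Finset.mem_range, Nat.lt_succ_iff] at hi
    calc (φ.coeff i • L ^ i).totalDegree
        = (MvPolynomial.C (φ.coeff i) * L ^ i).totalDegree := by rw [smul_eq_C_mul]
      _ ≤ (MvPolynomial.C (φ.coeff i)).totalDegree + (L ^ i).totalDegree :=
          totalDegree_mul _ _
      _ ≤ 0 + i * L.totalDegree := by
          exact add_le_add (le_of_eq (totalDegree_C _)) (totalDegree_pow _ _)
      _ ≤ i * 1 := by simpa using Nat.mul_le_mul_left i hLdeg
      _ ≤ φ.natDegree := by simpa using hi
  refine ⟨∑ s ∈ Q.support, MvPolynomial.monomial s (lam (Q.coeff s)), ?_, ?_⟩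
  · refine le_trans (totalDegree_finset_sum _ _) ?_
    apply Finset.sup_le; intro s hs
    exact le_trans (totalDegree_monomial_le _ _) (le_trans (le_totalDegree hs) hQdeg)
  · intro n
    have heval_aeval : MvPolynomial.eval (fun j => c (n j)) Q
        = (MvPolynomial.aeval (fun j => c (n j)) : MvPolynomial (Fin N) k →ₐ[k] k) Q := by
      rw [MvPolynomial.aeval_def, Algebra.algebraMap_self]
      rfl
    have h1 : MvPolynomial.eval (fun j => c (n j)) Q
        = Polynomial.eval (∑ j, c (n j) * a j) φ := by
      rw [heval_aeval, hQ, ← Polynomial.aeval_algHom_apply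
        (MvPolynomial.aeval (fun j => c (n j)) : MvPolynomial (Fin N) k →ₐ[k] k) L φ]
      have h2 : (MvPolynomial.aeval (fun j => c (n j)) : MvPolynomial (Fin N) k →ₐ[k] k) L
          = ∑ j, c (n j) * a j := by
        rw [hL, map_sum]
        exact Finset.sum_congr rfl fun j _ => by simp [mul_comm]
      rw [h2]
      simp [Polynomial.aeval_def, Polynomial.eval, -Polynomial.eval₂_id]
    rw [← h1, MvPolynomial.eval_eq (fun j => c (n j)) Q, map_sum, map_sum]
    refine Finset.sum_congr rfl fun s hs => ?_
    rw [eval_monomial]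
    have h3 : ∏ i ∈ s.support, (c (n i)) ^ s i = c (∏ i ∈ s.support, (n i) ^ s i) := by
      rw [map_prod]
      exact Finset.prod_congr rfl fun i _ => (map_pow c _ _).symm
    rw [h3, lam_mul_cast]
    rfl

lemma exists_indep [NeZero p] (hp : p.Prime) (𝔞 : AddSubgroup k)
    (h𝔞 : (𝔞 : Set k).Infinite) (N : ℕ) :
    ∃ a : Fin N → k, (∀ j, a j ∈ 𝔞) ∧
      ∀ n : Fin N → ZMod p, ∑ j, ZMod.castHom (dvd_refl p) k (n j) * a j = 0 → n = 0 := by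
  haveI := Fact.mk hp
  set c := ZMod.castHom (dvd_refl p) k with hc
  induction N with
  | zero => exact ⟨fun j => 0, fun j => j.elim0, fun n _ => Subsingleton.elim _ _⟩
  | succ m ih =>
    obtain ⟨a, ha, hind⟩ := ih
    have hfin : (Set.range (fun n : Fin m → ZMod p => ∑ j, c (n j) * a j)).Finite :=
      Set.finite_range _
    obtain ⟨b, hb𝔞, hbS⟩ : ∃ b ∈ (𝔞 : Set k),
        b ∉ Set.range (fun n : Fin m → ZMod p => ∑ j, c (n j) * a j) := by
      by_contra h
      push_neg at h
      exact h𝔞 (hfin.subset h)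
    refine ⟨Fin.cons b a, ?_, ?_⟩
    · intro j
      refine Fin.cases hb𝔞 (fun i => ?_) j
      simpa using ha i
    · intro n hn
      rw [Fin.sum_univ_succ] at hn
      simp only [Fin.cons_zero, Fin.cons_succ] at hn
      by_cases h0 : n 0 = 0
      · rw [h0, map_zero, zero_mul, zero_add] at hn
        have htail := hind (fun i => n i.succ) hn
        funext j
        refine Fin.cases h0 (fun i => ?_) j
        exact congrFun htail i
      · exfalso
        apply hbS
        refine ⟨fun i => -(n 0)⁻¹ * n i.succ, ?_⟩
        have hinv : (n 0)⁻¹ * (n 0) = 1 := inv_mul_cancel₀ h0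
        have hsum : ∑ i, c (n i.succ) * a i = -(c (n 0) * b) :=
          eq_neg_of_add_eq_zero_right hn
        calc ∑ j, c (-(n 0)⁻¹ * n j.succ) * a j
            = c (-(n 0)⁻¹) * ∑ i, c (n i.succ) * a i := by
              rw [Finset.mul_sum]
              exact Finset.sum_congr rfl fun i _ => by rw [map_mul, mul_assoc]
          _ = c (-(n 0)⁻¹) * -(c (n 0) * b) := by rw [hsum]
          _ = c ((n 0)⁻¹ * n 0) * b := by rw [map_neg, map_mul]; ring
          _ = b := by rw [hinv, map_one, one_mul]

end aux

set_option maxHeartbeats 1000000 in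
theorem stmt12 (k : Type) [Field k] [Infinite k] (p : ℕ) (hp : p.Prime) [CharP k p]
    (r : ℕ) (φ : Fin r → Polynomial k) (lam : Fin r → (k →+ ZMod p))
    (h0 : ∀ i, lam i ((φ i).eval 0) = 0)
    (𝔞 : AddSubgroup k) (h𝔞 : (𝔞 : Set k).Infinite) :
    ∃ a ∈ 𝔞, a ≠ 0 ∧ ∀ i, lam i ((φ i).eval a) = 0 := by
  haveI := Fact.mk hp
  haveI : NeZero p := ⟨hp.ne_zero⟩
  set c := ZMod.castHom (dvd_refl p) k with hc
  set N := (∑ i, (φ i).natDegree) + 1 with hN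
  obtain ⟨a, ha, hind⟩ := exists_indep hp 𝔞 h𝔞 N
  choose P hPdeg hPeval using fun i => key_poly N a (φ i) (lam i)
  have hlt : (∑ i, (P i).totalDegree) < Fintype.card (Fin N) := by
    calc ∑ i, (P i).totalDegree ≤ ∑ i, (φ i).natDegree := Finset.sum_le_sum fun i _ => hPdeg i
      _ < N := by rw [hN]; omega
      _ = Fintype.card (Fin N) := (Fintype.card_fin N).symm
  have hCW := char_dvd_card_solutions_of_fintype_sum_lt (K := ZMod p) (σ := Fin N) p hlt
  have hzero : ∀ i, MvPolynomial.eval (0 : Fin N → ZMod p) (P i) = 0 := by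
    intro i
    rw [hPeval]
    simp only [Pi.zero_apply, map_zero, zero_mul, Finset.sum_const_zero]
    exact h0 i
  haveI : Nonempty { x : Fin N → ZMod p // ∀ i, MvPolynomial.eval x (P i) = 0 } := ⟨⟨0, hzero⟩⟩
  obtain ⟨inst, hCW⟩ : ∃ _ : Fintype { x : Fin N → ZMod p // ∀ i, MvPolynomial.eval x (P i) = 0 },
      p ∣ Fintype.card { x : Fin N → ZMod p // ∀ i, MvPolynomial.eval x (P i) = 0 } := ⟨_, hCW⟩
  have hCW2 : p ∣ Nat.card { x : Fin N → ZMod p // ∀ i, MvPolynomial.eval x (P i) = 0 } := by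
    rwa [← @Nat.card_eq_fintype_card _ inst] at hCW
  have hpos : 0 < Nat.card { x : Fin N → ZMod p // ∀ i, MvPolynomial.eval x (P i) = 0 } :=
    Nat.card_pos
  have h1lt : 1 < Nat.card { x : Fin N → ZMod p // ∀ i, MvPolynomial.eval x (P i) = 0 } :=
    lt_of_lt_of_le hp.one_lt (Nat.le_of_dvd hpos hCW2)
  haveI : Nontrivial { x : Fin N → ZMod p // ∀ i, MvPolynomial.eval x (P i) = 0 } :=
    Finite.one_lt_card_iff_nontrivial.mp h1lt
  obtain ⟨x, hx⟩ := exists_ne (⟨0, hzero⟩ : { x : Fin N → ZMod p // ∀ i, MvPolynomial.eval x (P i) = 0 })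
  have hn0 : x.1 ≠ 0 := by
    intro h
    exact hx (Subtype.ext h)
  refine ⟨∑ j, c (x.1 j) * a j, ?_, ?_, ?_⟩
  · refine AddSubgroup.sum_mem 𝔞 fun j _ => ?_
    have h5 : c (x.1 j) * a j = (x.1 j).val • a j := by
      rw [hc, cast_eq_natCast, nsmul_eq_mul]
    rw [h5]
    exact AddSubgroup.nsmul_mem 𝔞 (ha j) _
  · intro h
    exact hn0 (hind x.1 h)
  · intro i
    rw [← hPeval i x.1]
    exact x.2 i
end

section
/- Let $p$ be a prime and let $G$ be an abelian group of exponent $p$ (i.e., $g^p = 1$ for all $g \in G$). Let $M$ be an abelian group on which multiplication by $p$ is bijective (equivalently, a module over $\mathbb{Z}[1/p]$), equipped with an action of $G$ by additive automorphisms, and let $m \in M$ be nonzero. Then there exists a subgroup $H \subseteq G$ of index $1$ or $p$ such that the image of $m$ in the coinvariants $M_H$ is nonzero. -/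
open Finset

section StmtAux

variable {p : ℕ} {G : Type} [CommGroup G] {M : Type} [AddCommGroup M] [DistribMulAction G M]

/-- The augmentation subgroup: subgroup of `M` generated by `g • x - x` for `g ∈ H`. -/
def aug (M : Type) [AddCommGroup M] [DistribMulAction G M] (H : Subgroup G) : AddSubgroup M :=
  AddSubgroup.closure {y : M | ∃ (g : H) (x : M), y = (g : G) • x - x}

theorem aug_mono {H H' : Subgroup G} (h : H ≤ H') : aug M H ≤ aug M H' := by
  apply AddSubgroup.closure_mono
  rintro y ⟨g, x, rfl⟩
  exact ⟨⟨(g : G), h g.2⟩, x, rfl⟩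

theorem aug_bot : aug M (⊥ : Subgroup G) = ⊥ := by
  refine le_antisymm ((AddSubgroup.closure_le _).2 ?_) bot_le
  rintro y ⟨g, x, rfl⟩
  have : (g : G) = 1 := g.2
  simp [this]

theorem nsmul_mem_aug_iff (hbij : Function.Bijective fun x : M => p • x)
    (H : Subgroup G) (x : M) : p • x ∈ aug M H ↔ x ∈ aug M H := by
  let φ : M →+ M := AddMonoidHom.mk' (fun x : M => p • x) (fun a b => smul_add p a b)
  have key : aug M H ≤ (aug M H).map φ := by
    refine (AddSubgroup.closure_le _).2 ?_
    rintro y ⟨g, x, rfl⟩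
    obtain ⟨x', rfl⟩ := hbij.2 x
    refine ⟨(g : G) • x' - x', AddSubgroup.subset_closure ⟨g, x', rfl⟩, ?_⟩
    show p • ((g : G) • x' - x') = (g : G) • (p • x') - p • x'
    rw [smul_sub, smul_comm]
  constructor
  · intro h
    obtain ⟨y, hy, hyx⟩ := key h
    have : p • y = p • x := hyx
    rwa [← hbij.1 this]
  · intro h
    exact AddSubgroup.nsmul_mem _ h p

theorem pow_nsmul_mem_aug (hbij : Function.Bijective fun x : M => p • x)
    (H : Subgroup G) (x : M) (k : ℕ) (h : p ^ k • x ∈ aug M H) : x ∈ aug M H := by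
  induction k with
  | zero => simpa using h
  | succ n ih =>
    apply ih
    rw [← nsmul_mem_aug_iff hbij, smul_smul, ← pow_succ']
    exact h

/-- The norm kills the augmentation subgroup. -/
theorem norm_eq_zero_of_mem_aug (C : Subgroup G) [Fintype C] {y : M} (hy : y ∈ aug M C) :
    ∑ c : C, (c : G) • y = 0 := by
  induction hy using AddSubgroup.closure_induction with
  | mem y hy =>
    obtain ⟨g, x, rfl⟩ := hy
    have : ∀ c : C, (c : G) • ((g : G) • x - x) = ((c * g : C) : G) • x - (c : G) • x := by
      intro c
      rw [smul_sub, smul_smul]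
      push_cast
      ring_nf
    simp_rw [this, Finset.sum_sub_distrib]
    exact sub_eq_zero.mpr
      (Fintype.sum_equiv (Equiv.mulRight g) _ (fun c : C => (c : G) • x) (fun c => rfl))
  | zero => simp
  | add a b _ _ ha hb => simp only [smul_add, Finset.sum_add_distrib, ha, hb, add_zero]
  | neg a _ ha => simp only [smul_neg, Finset.sum_neg_distrib, ha, neg_zero]

theorem mem_aug_of_norm_eq_zero (hp : p.Prime) (hG : ∀ g : G, g ^ p = 1)
    (hbij : Function.Bijective fun x : M => p • x)
    (C : Subgroup G) [Fintype C] {y : M} (h : ∑ c : C, (c : G) • y = 0) : y ∈ aug M C := by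
  haveI : Fact p.Prime := ⟨hp⟩
  have hcard : Fintype.card C • y ∈ aug M C := by
    have he : Fintype.card C • y = ∑ c : C, (y - (c : G) • y) := by
      rw [Finset.sum_sub_distrib, h, sub_zero, Finset.sum_const, Finset.card_univ]
    rw [he]
    refine AddSubgroup.sum_mem _ fun c _ => ?_
    rw [← neg_sub]
    exact AddSubgroup.neg_mem _ (AddSubgroup.subset_closure ⟨c, y, rfl⟩)
  have hpg : IsPGroup p C := fun c =>
    ⟨1, by rw [pow_one]; exact Subtype.ext (by rw [Subgroup.coe_pow]; exact hG (c : G))⟩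
  obtain ⟨k, hk⟩ := hpg.exists_card_eq
  rw [Nat.card_eq_fintype_card] at hk
  exact pow_nsmul_mem_aug hbij C y k (by rwa [← hk])

theorem exists_finset_aug {H : Subgroup G} {y : M} (hy : y ∈ aug M H) :
    ∃ S : Finset G, ↑S ⊆ (H : Set G) ∧ y ∈ aug M (Subgroup.closure (S : Set G)) := by
  classical
  induction hy using AddSubgroup.closure_induction with
  | mem y hy =>
    obtain ⟨g, x, rfl⟩ := hy
    exact ⟨{(g : G)}, by simpa using g.2,
      AddSubgroup.subset_closure ⟨⟨(g : G), Subgroup.subset_closure (by simp)⟩, x, rfl⟩⟩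
  | zero => exact ⟨∅, by simp, zero_mem _⟩
  | add a b _ _ ha hb =>
    obtain ⟨S₁, hS₁, h₁⟩ := ha
    obtain ⟨S₂, hS₂, h₂⟩ := hb
    refine ⟨S₁ ∪ S₂, ?_, ?_⟩
    · rw [Finset.coe_union]
      exact Set.union_subset hS₁ hS₂
    · rw [Finset.coe_union]
      exact add_mem (aug_mono (Subgroup.closure_mono Set.subset_union_left) h₁)
        (aug_mono (Subgroup.closure_mono Set.subset_union_right) h₂)
  | neg a _ ha =>
    obtain ⟨S, hS, h⟩ := ha
    exact ⟨S, hS, neg_mem h⟩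

theorem finite_closure_finset (hp : 0 < p) (hG : ∀ g : G, g ^ p = 1) (S : Finset G) :
    Finite (Subgroup.closure (S : Set G)) := by
  have ht : Monoid.IsTorsion ↥(Subgroup.closure (S : Set G)) := by
    intro g
    refine isOfFinOrder_iff_pow_eq_one.mpr ⟨p, hp, ?_⟩
    ext
    rw [Subgroup.coe_pow, Subgroup.coe_one]
    exact hG _
  exact CommGroup.finite_of_fg_torsion _ ht

theorem pow_mod_exp {w : G} (hw : w ^ p = 1) (n : ℕ) : w ^ n = w ^ (n % p) := by
  conv_lhs => rw [← Nat.mod_add_div n p]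
  rw [pow_add, pow_mul, hw, one_pow, mul_one]

theorem sum_range_shift {β : Type} [AddCommMonoid β] (hp : 0 < p) (n : ℕ) (F : ℕ → β) :
    ∑ i ∈ range p, F ((i + n) % p) = ∑ i ∈ range p, F i := by
  have hn := Nat.mod_add_div n p
  have hnp : n % p < p := Nat.mod_lt _ hp
  have hd : p * (n / p + 1) = p * (n / p) + p := by ring
  refine Finset.sum_nbij' (fun a => (a + n) % p) (fun a => (a + (p - n % p)) % p)
    (fun a _ => mem_range.2 (Nat.mod_lt _ hp)) (fun a _ => mem_range.2 (Nat.mod_lt _ hp))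
    ?_ ?_ (fun a _ => rfl)
  · intro a ha
    show ((a + n) % p + (p - n % p)) % p = a
    rw [Nat.mod_add_mod]
    have he : a + n + (p - n % p) = a + p * (n / p + 1) := by omega
    rw [he, Nat.add_mul_mod_self_left, Nat.mod_eq_of_lt (mem_range.1 ha)]
  · intro a ha
    show ((a + (p - n % p)) % p + n) % p = a
    rw [Nat.mod_add_mod]
    have he : a + (p - n % p) + n = a + p * (n / p + 1) := by omega
    rw [he, Nat.add_mul_mod_self_left, Nat.mod_eq_of_lt (mem_range.1 ha)]

theorem sum_range_mul {β : Type} [AddCommMonoid β] (hp : p.Prime) {i : ℕ} (hi0 : 0 < i)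
    (hip : i < p) (F : ℕ → β) :
    ∑ j ∈ range p, F (i * j % p) = ∑ j ∈ range p, F j := by
  have hpos : 0 < p := hp.pos
  have hco : Nat.Coprime i p :=
    Nat.coprime_comm.mp (hp.coprime_iff_not_dvd.mpr (Nat.not_dvd_of_pos_of_lt hi0 hip))
  obtain ⟨i', -, hii'⟩ := Nat.exists_mul_mod_eq_one_of_coprime hco hp.one_lt
  refine Finset.sum_nbij' (fun a => i * a % p) (fun a => i' * a % p)
    (fun a _ => mem_range.2 (Nat.mod_lt _ hpos)) (fun a _ => mem_range.2 (Nat.mod_lt _ hpos))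
    ?_ ?_ (fun a _ => rfl)
  · intro a ha
    show i' * (i * a % p) % p = a
    have h1 : i' * (i * a) = i * i' * a := by ring
    rw [Nat.mul_mod, Nat.mod_mod_of_dvd _ dvd_rfl, ← Nat.mul_mod, h1, Nat.mul_mod, hii',
      one_mul, Nat.mod_mod_of_dvd _ dvd_rfl, Nat.mod_eq_of_lt (mem_range.1 ha)]
  · intro a ha
    show i * (i' * a % p) % p = a
    have h1 : i * (i' * a) = i * i' * a := by ring
    rw [Nat.mul_mod, Nat.mod_mod_of_dvd _ dvd_rfl, ← Nat.mul_mod, h1, Nat.mul_mod, hii',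
      one_mul, Nat.mod_mod_of_dvd _ dvd_rfl, Nat.mod_eq_of_lt (mem_range.1 ha)]

/-- The partial norm operator along a single element. -/
def pin (p : ℕ) (h : G) (x : M) : M := ∑ i ∈ Finset.range p, h ^ i • x

theorem pin_zero (h : G) : pin p h (0 : M) = 0 := by simp [pin]

theorem pin_pow_mul (hp : p.Prime) {w : G} (hw : w ^ p = 1) {i : ℕ} (hi0 : 0 < i) (hip : i < p)
    (x : M) : ∑ j ∈ range p, w ^ (j * i) • x = pin p w x := by
  calc ∑ j ∈ range p, w ^ (j * i) • x
      = ∑ j ∈ range p, (fun n => w ^ n • x) (i * j % p) := by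
        refine Finset.sum_congr rfl fun j _ => ?_
        simp only
        rw [Nat.mul_comm j i, pow_mod_exp hw]
    _ = ∑ j ∈ range p, w ^ j • x := sum_range_mul hp hi0 hip (fun n => w ^ n • x)
    _ = pin p w x := rfl

theorem pin_identity (hp : p.Prime) (g g' : G) (hg' : g' ^ p = 1) (x : M) :
    (∑ j ∈ range p, pin p (g * g' ^ j) x) + pin p g' x = p • x + pin p g (pin p g' x) := by
  have hpos : 0 < p := hp.pos
  have hstep : ∀ j, pin p (g * g' ^ j) x = ∑ i ∈ range p, g ^ i • g' ^ (j * i) • x := by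
    intro j
    refine Finset.sum_congr rfl fun i _ => ?_
    rw [mul_pow, ← pow_mul, mul_smul]
  rw [Finset.sum_congr rfl (fun j _ => hstep j), Finset.sum_comm]
  set P := pin p g' x with hP
  have hinner : ∀ i ∈ Ico 1 p, (∑ j ∈ range p, g ^ i • g' ^ (j * i) • x) = g ^ i • P := by
    intro i hi
    rw [← Finset.smul_sum, pin_pow_mul hp hg' (mem_Ico.1 hi).1 (mem_Ico.1 hi).2]
  rw [Finset.sum_range_eq_add_Ico _ hpos]
  rw [Finset.sum_congr rfl hinner]
  have h0 : (∑ j ∈ range p, g ^ 0 • g' ^ (j * 0) • x) = p • x := by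
    simp [Finset.sum_const, Finset.card_range]
  rw [h0]
  have hR : pin p g P = P + ∑ i ∈ Ico 1 p, g ^ i • P := by
    rw [pin, Finset.sum_range_eq_add_Ico _ hpos, pow_zero, one_smul]
  rw [hR]
  abel

theorem pin_norm_aug (hp : p.Prime) (hG : ∀ g : G, g ^ p = 1) (C : Subgroup G) [Fintype C]
    (h : G) {y : M} (hy : y ∈ aug M (C ⊔ Subgroup.zpowers h)) :
    pin p h (∑ c : C, (c : G) • y) = 0 := by
  induction hy using AddSubgroup.closure_induction with
  | zero => simp [pin]
  | add a b _ _ ha hb =>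
    have : ∀ c : C, (c : G) • (a + b) = (c : G) • a + (c : G) • b := fun c => smul_add _ _ _
    simp only [this, Finset.sum_add_distrib]
    simp only [pin, smul_add, Finset.sum_add_distrib] at ha hb ⊢
    rw [ha, hb, add_zero]
  | neg a _ ha =>
    simp only [smul_neg, Finset.sum_neg_distrib]
    simp only [pin, smul_neg, Finset.sum_neg_distrib] at ha ⊢
    rw [ha, neg_zero]
  | mem y hy =>
    obtain ⟨e, x, rfl⟩ := hy
    obtain ⟨c₀, hc₀, z, hz, hze⟩ := Subgroup.mem_sup.mp e.2
    have horder : IsOfFinOrder h := isOfFinOrder_iff_pow_eq_one.mpr ⟨p, hp.pos, hG h⟩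
    obtain ⟨n, hn0⟩ := horder.mem_powers_iff_mem_zpowers.mpr hz
    have hn : h ^ n = z := hn0
    have key : ∀ x : M, pin p h (∑ c : C, (c : G) • ((e : G) • x)) =
        pin p h (∑ c : C, (c : G) • x) := by
      intro x
      have hterm : ∀ (i : ℕ) (c : C),
          h ^ i • ((c : G) • ((e : G) • x)) = (h ^ ((i + n) % p) * ((c : G) * c₀)) • x := by
        intro i c
        rw [smul_smul, smul_smul, ← pow_mod_exp (hG h), pow_add, ← hze, ← hn]
        congr 1
        ac_rfl
      calc pin p h (∑ c : C, (c : G) • ((e : G) • x))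
          = ∑ i ∈ range p, ∑ c : C, h ^ i • ((c : G) • ((e : G) • x)) := by
            simp only [pin, Finset.smul_sum]
        _ = ∑ i ∈ range p, ∑ c : C, (h ^ ((i + n) % p) * ((c : G) * c₀)) • x := by
            refine Finset.sum_congr rfl fun i _ => Finset.sum_congr rfl fun c _ => hterm i c
        _ = ∑ i ∈ range p, ∑ c : C, (h ^ ((i + n) % p) * (c : G)) • x := by
            refine Finset.sum_congr rfl fun i _ => ?_
            exact Fintype.sum_equiv (Equiv.mulRight (⟨c₀, hc₀⟩ : C)) _ _ (fun c => rfl)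
        _ = ∑ i ∈ range p, ∑ c : C, (h ^ i * (c : G)) • x :=
            sum_range_shift hp.pos n (fun k => ∑ c : C, (h ^ k * (c : G)) • x)
        _ = pin p h (∑ c : C, (c : G) • x) := by
            simp only [pin, Finset.smul_sum, smul_smul]
    have hsub : ∀ c : C, (c : G) • ((e : G) • x - x) =
        (c : G) • ((e : G) • x) - (c : G) • x := fun c => smul_sub _ _ _
    simp only [hsub, Finset.sum_sub_distrib]
    have hpinsub : ∀ u v : M, pin p h (u - v) = pin p h u - pin p h v := by
      intro u v
      simp only [pin, smul_sub, Finset.sum_sub_distrib]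
    rw [hpinsub, key, sub_self]

theorem exists_finset_part (K : Subgroup G) (h : G) (S : Finset G) :
    ↑S ⊆ ((K ⊔ Subgroup.zpowers h : Subgroup G) : Set G) →
    ∃ T : Finset G, ↑T ⊆ (K : Set G) ∧
      (S : Set G) ⊆ ((Subgroup.closure (T : Set G) ⊔ Subgroup.zpowers h : Subgroup G) : Set G) := by
  classical
  induction S using Finset.induction with
  | empty => exact fun _ => ⟨∅, by simp, by simp⟩
  | @insert a S hna ih =>
    intro hS
    have hS' : ↑S ⊆ ((K ⊔ Subgroup.zpowers h : Subgroup G) : Set G) :=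
      Set.Subset.trans (by simp) hS
    obtain ⟨T, hT, hST⟩ := ih hS'
    have ha : a ∈ K ⊔ Subgroup.zpowers h := hS (Finset.mem_insert_self a S)
    obtain ⟨c, hc, z, hz, hcz⟩ := Subgroup.mem_sup.mp ha
    refine ⟨T ∪ {c}, ?_, ?_⟩
    · rw [Finset.coe_union]
      exact Set.union_subset hT (by simpa using hc)
    · rw [Finset.coe_insert]
      refine Set.insert_subset ?_ ?_
      · rw [← hcz]
        refine mul_mem (Subgroup.mem_sup_left ?_) (Subgroup.mem_sup_right hz)
        exact Subgroup.subset_closure (by simp)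
      · refine Set.Subset.trans hST ?_
        have : Subgroup.closure (T : Set G) ≤ Subgroup.closure ((T ∪ {c} : Finset G) : Set G) := by
          apply Subgroup.closure_mono
          rw [Finset.coe_union]
          exact Set.subset_union_left
        exact fun x hx => sup_le_sup_right this _ hx

end StmtAux
theorem stmt13 (p : ℕ) (hp : p.Prime) (G : Type) [CommGroup G]
    (hG : ∀ g : G, g ^ p = 1)
    (M : Type) [AddCommGroup M] [DistribMulAction G M]
    (hbij : Function.Bijective fun x : M => p • x)
    (m : M) (hm : m ≠ 0) :
    ∃ H : Subgroup G, (H.index = 1 ∨ H.index = p) ∧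
      m ∉ AddSubgroup.closure {y : M | ∃ (g : H) (x : M), y = (g : G) • x - x} := by
  classical
  haveI : Fact p.Prime := ⟨hp⟩
  by_contra hcon
  push_neg at hcon
  have hcon' : ∀ H : Subgroup G, H.index = 1 ∨ H.index = p → m ∈ aug M H := hcon
  -- Zorn's lemma: a maximal subgroup `K` such that `m` survives in the `K`-coinvariants
  have hchainub : ∀ c ⊆ {K : Subgroup G | m ∉ aug M K}, IsChain (· ≤ ·) c →
      ∀ y ∈ c, ∃ ub ∈ {K : Subgroup G | m ∉ aug M K}, ∀ z ∈ c, z ≤ ub := by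
    intro c hcs hchain y hy
    refine ⟨sSup c, ?_, fun z hz => le_sSup hz⟩
    intro hmem
    obtain ⟨S, hS, hSm⟩ := exists_finset_aug hmem
    have key : ∀ S : Finset G, ↑S ⊆ ((sSup c : Subgroup G) : Set G) →
        ∃ K ∈ c, (S : Set G) ⊆ (K : Set G) := by
      intro S
      induction S using Finset.induction with
      | empty => exact fun _ => ⟨y, hy, by simp⟩
      | @insert a S hna ih =>
        intro hsub
        obtain ⟨K₁, hK₁, hS₁⟩ := ih (Set.Subset.trans (by simp) hsub)
        have ha : a ∈ sSup c := hsub (by simp)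
        rw [Subgroup.mem_sSup_of_directedOn ⟨y, hy⟩ hchain.directedOn] at ha
        obtain ⟨K₂, hK₂, haK₂⟩ := ha
        rcases hchain.total hK₁ hK₂ with h12 | h21
        · refine ⟨K₂, hK₂, ?_⟩
          rw [Finset.coe_insert]
          exact Set.insert_subset haK₂ (Set.Subset.trans hS₁ h12)
        · refine ⟨K₁, hK₁, ?_⟩
          rw [Finset.coe_insert]
          exact Set.insert_subset (h21 haK₂) hS₁
    obtain ⟨K, hKc, hSK⟩ := key S hS
    exact hcs hKc (aug_mono ((Subgroup.closure_le _).mpr hSK) hSm)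
  obtain ⟨K, -, hKmax⟩ :=
    zorn_le_nonempty₀ {K : Subgroup G | m ∉ aug M K} hchainub ⊥
      (by
        intro hmem
        rw [aug_bot] at hmem
        exact hm (AddSubgroup.mem_bot.mp hmem))
  have hKs : m ∉ aug M K := hKmax.1
  -- K ≠ ⊤
  have hKtop : K ≠ ⊤ := by
    intro h
    exact hKs (h ▸ hcon' ⊤ (Or.inl Subgroup.index_top))
  obtain ⟨g, hg⟩ : ∃ g : G, g ∉ K := by
    by_contra hall
    push_neg at hall
    exact hKtop ((Subgroup.eq_top_iff' K).mpr hall)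
  -- every strictly bigger subgroup kills m
  have hplane : ∀ h : G, h ∉ K → m ∈ aug M (K ⊔ Subgroup.zpowers h) := by
    intro h hh
    by_contra hmem
    exact hh (hKmax.2 hmem le_sup_left (Subgroup.mem_sup_right (Subgroup.mem_zpowers h)))
  by_cases hsup : K ⊔ Subgroup.zpowers g = ⊤
  · -- in this case K has index p
    have hidx : K.index = p := by
      rw [Subgroup.index_eq_card]
      set gb : G ⧸ K := QuotientGroup.mk g with hgb
      have hgb1 : gb ≠ 1 := by
        intro h1
        exact hg ((QuotientGroup.eq_one_iff g).mp h1)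
      have hgbp : gb ^ p = 1 := by
        rw [hgb, ← QuotientGroup.mk_pow, hG g, QuotientGroup.mk_one]
      have hord : orderOf gb = p := orderOf_eq_prime hgbp hgb1
      have htop : Subgroup.zpowers gb = ⊤ := by
        rw [eq_top_iff]
        rintro q -
        obtain ⟨x, rfl⟩ := QuotientGroup.mk_surjective q
        have hx : x ∈ K ⊔ Subgroup.zpowers g := hsup ▸ Subgroup.mem_top x
        obtain ⟨c, hc, z, hz, rfl⟩ := Subgroup.mem_sup.mp hx
        obtain ⟨k, rfl⟩ := hz
        refine ⟨k, ?_⟩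
        show gb ^ k = QuotientGroup.mk (c * g ^ k)
        rw [QuotientGroup.mk_mul, (QuotientGroup.eq_one_iff c).mpr hc, one_mul, hgb,
          ← QuotientGroup.mk_zpow]
      calc Nat.card (G ⧸ K) = Nat.card (⊤ : Subgroup (G ⧸ K)) := Subgroup.card_top.symm
        _ = Nat.card (Subgroup.zpowers gb) := by rw [htop]
        _ = orderOf gb := Nat.card_zpowers gb
        _ = p := hord
    exact hKs (hcon' K (Or.inr hidx))
  · -- there are two independent directions mod K
    obtain ⟨g', hg'⟩ : ∃ g' : G, g' ∉ K ⊔ Subgroup.zpowers g := by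
      by_contra hall
      push_neg at hall
      exact hsup ((Subgroup.eq_top_iff' _).mpr hall)
    have hg'K : g' ∉ K := fun h => hg' (Subgroup.mem_sup_left h)
    -- the elements g * g'^j are not in K
    have hjK : ∀ j : ℕ, j < p → g * g' ^ j ∉ K := by
      intro j hjp hmem
      rcases Nat.eq_zero_or_pos j with rfl | hj0
      · rw [pow_zero, mul_one] at hmem
        exact hg hmem
      · have h1 : g' ^ j ∈ K ⊔ Subgroup.zpowers g := by
          have he : g' ^ j = g⁻¹ * (g * g' ^ j) := by group
          rw [he]
          exact mul_mem (Subgroup.mem_sup_right (inv_mem (Subgroup.mem_zpowers g)))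
            (Subgroup.mem_sup_left hmem)
        have hco : Nat.Coprime j p :=
          Nat.coprime_comm.mp (hp.coprime_iff_not_dvd.mpr (Nat.not_dvd_of_pos_of_lt hj0 hjp))
        obtain ⟨a, -, ha⟩ := Nat.exists_mul_mod_eq_one_of_coprime hco hp.one_lt
        have hgg : g' = (g' ^ j) ^ a := by
          rw [← pow_mul, pow_mod_exp (hG g'), ha, pow_one]
        exact hg' (hgg ▸ pow_mem h1 a)
    -- choose a finite subgroup C of K capturing all the relations
    have hfin : ∀ h : G, h ∉ K → ∃ T : Finset G, ↑T ⊆ (K : Set G) ∧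
        m ∈ aug M (Subgroup.closure (T : Set G) ⊔ Subgroup.zpowers h) := by
      intro h hh
      obtain ⟨S, hS, hSm⟩ := exists_finset_aug (hplane h hh)
      obtain ⟨T, hT, hST⟩ := exists_finset_part K h S hS
      exact ⟨T, hT, aug_mono ((Subgroup.closure_le _).mpr hST) hSm⟩
    have hTj : ∀ j : ℕ, ∃ T : Finset G, j < p → (↑T ⊆ (K : Set G) ∧
        m ∈ aug M (Subgroup.closure (T : Set G) ⊔ Subgroup.zpowers (g * g' ^ j))) := by
      intro j
      by_cases hjp : j < p
      · obtain ⟨T, hT⟩ := hfin _ (hjK j hjp)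
        exact ⟨T, fun _ => hT⟩
      · exact ⟨∅, fun h => absurd h hjp⟩
    choose T hT using hTj
    obtain ⟨T', hT'K, hT'm⟩ := hfin g' hg'K
    set Tall : Finset G := (Finset.range p).biUnion T ∪ T' with hTall
    have hTallK : ↑Tall ⊆ (K : Set G) := by
      rw [hTall, Finset.coe_union]
      refine Set.union_subset ?_ hT'K
      intro x hx
      rw [Finset.mem_coe, Finset.mem_biUnion] at hx
      obtain ⟨j, hj, hxj⟩ := hx
      exact (hT j (Finset.mem_range.mp hj)).1 hxj
    set C : Subgroup G := Subgroup.closure (Tall : Set G) with hC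
    have hCK : C ≤ K := (Subgroup.closure_le _).mpr hTallK
    haveI hCfin : Finite C := finite_closure_finset hp.pos hG Tall
    haveI : Fintype C := Fintype.ofFinite C
    -- the relevant norms of m vanish
    have hkillj : ∀ j ∈ Finset.range p,
        pin p (g * g' ^ j) (∑ c : C, (c : G) • m) = 0 := by
      intro j hj
      have hj' := Finset.mem_range.mp hj
      have hle : Subgroup.closure ((T j : Finset G) : Set G) ≤ C := by
        apply Subgroup.closure_mono
        intro x hx
        rw [hTall, Finset.coe_union]
        exact Set.subset_union_left (Finset.mem_coe.mpr (Finset.mem_biUnion.mpr ⟨j, hj, hx⟩))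
      have hmem : m ∈ aug M (C ⊔ Subgroup.zpowers (g * g' ^ j)) :=
        aug_mono (sup_le_sup_right hle _) (hT j hj').2
      exact pin_norm_aug hp hG C (g * g' ^ j) hmem
    have hkill' : pin p g' (∑ c : C, (c : G) • m) = 0 := by
      have hle : Subgroup.closure ((T' : Finset G) : Set G) ≤ C := by
        apply Subgroup.closure_mono
        intro x hx
        rw [hTall, Finset.coe_union]
        exact Set.subset_union_right hx
      have hmem : m ∈ aug M (C ⊔ Subgroup.zpowers g') :=
        aug_mono (sup_le_sup_right hle _) hT'm
      exact pin_norm_aug hp hG C g' hmem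
    -- apply the key identity
    set N : M := ∑ c : C, (c : G) • m with hN
    have hid := pin_identity (M := M) hp g g' (hG g') N
    rw [Finset.sum_congr rfl hkillj, hkill', Finset.sum_const_zero, add_zero, pin_zero] at hid
    have hpN : p • N = 0 := by
      rw [add_zero] at hid
      exact hid.symm
    have hN0 : N = 0 := by
      have : p • N = p • (0 : M) := by rw [hpN, smul_zero]
      exact hbij.1 this
    -- hence m dies already in the C-coinvariants, contradiction
    have : m ∈ aug M C := mem_aug_of_norm_eq_zero hp hG hbij C (hN ▸ hN0)
    exact hKs (aug_mono hCK this)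
end

section
/- Let $G$ be a finite group, let $p$ be a prime, and let $M$ be a $\mathbb{Z}[G]$-module whose underlying abelian group is free of finite rank. If $M \otimes_{\mathbb{Z}} \overline{\mathbb{F}}_p$ is an irreducible representation of $G$ over an algebraic closure $\overline{\mathbb{F}}_p$ of $\mathbb{F}_p$, then for every field $\mathbb{F}$ of characteristic $0$, the representation $M \otimes_{\mathbb{Z}} \mathbb{F}$ of $G$ is irreducible. -/
open TensorProduct

section Burnside

variable {k V G' : Type*} [Field k] [IsAlgClosed k] [AddCommGroup V] [Module k V]
  [FiniteDimensional k V] [Nontrivial V] [Monoid G']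

/-- **Burnside's theorem** on irreducible representations: the operators of an
irreducible representation span all endomorphisms. -/
theorem burnside_span (ρ : G' →* Module.End k V)
    (hirr : ∀ W : Submodule k V, (∀ g, ∀ v ∈ W, ρ g v ∈ W) → W = ⊥ ∨ W = ⊤) :
    Submodule.span k (Set.range ⇑ρ) = ⊤ := by
  classical
  set R := MonoidAlgebra k G' with hR
  let φ : R →ₐ[k] Module.End k V := MonoidAlgebra.lift k (Module.End k V) G' ρ
  letI : Module R V := Module.compHom V φ.toRingHom
  have hsmul : ∀ (r : R) (v : V), r • v = φ r v := fun r v => rfl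
  have hsingle : ∀ (g : G') (c : k) (v : V),
      (MonoidAlgebra.single g c : R) • v = c • ρ g v := by
    intro g c v
    rw [hsmul, MonoidAlgebra.lift_single]
    rfl
  have hksmul : ∀ (c : k) (v : V), (MonoidAlgebra.single 1 c : R) • v = c • v := by
    intro c v
    rw [hsingle, map_one]
    rfl
  -- any R-submodule is a k-submodule stable under ρ
  haveI hsimple : IsSimpleModule R V := by
    haveI : Nontrivial (Submodule R V) := by
      refine ⟨⟨⊥, ⊤, fun h => ?_⟩⟩
      obtain ⟨x, y, hxy⟩ := exists_pair_ne V
      have hx : ∀ v : V, v ∈ (⊥ : Submodule R V) := fun v => h ▸ Submodule.mem_top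
      exact hxy ((Submodule.mem_bot R).mp (hx x) |>.trans ((Submodule.mem_bot R).mp (hx y)).symm)
    refine { toIsSimpleOrder := ⟨fun W => ?_⟩ }
    let W' : Submodule k V :=
      { carrier := W
        add_mem' := fun h1 h2 => W.add_mem h1 h2
        zero_mem' := W.zero_mem
        smul_mem' := fun c v hv => by
          have := W.smul_mem (MonoidAlgebra.single 1 c : R) hv
          rwa [hksmul] at this }
    have hmem : ∀ x : V, x ∈ W' ↔ x ∈ W := fun x => Iff.rfl
    have hstab : ∀ g, ∀ v ∈ W', ρ g v ∈ W' := by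
      intro g v hv
      have := W.smul_mem (MonoidAlgebra.single g 1 : R) hv
      rwa [hsingle, one_smul] at this
    rcases hirr W' hstab with h | h
    · left; ext x
      rw [← hmem x, h]
      rfl
    · right; ext x
      rw [← hmem x, h]
      simp [Submodule.mem_top]
  -- Schur's lemma
  have schur : ∀ ψ : V →ₗ[R] V, ∃ c : k, ∀ v, ψ v = c • v := by
    intro ψ
    let ψk : V →ₗ[k] V :=
      { toFun := ψ
        map_add' := fun x y => ψ.map_add x y
        map_smul' := fun c v => by
          simp only [RingHom.id_apply]
          rw [← hksmul c v, ψ.map_smul, hksmul] }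
    obtain ⟨c, hc⟩ := Module.End.exists_eigenvalue ψk
    obtain ⟨v, hv⟩ := hc.exists_hasEigenvector
    refine ⟨c, ?_⟩
    let K' : Submodule R V :=
      { carrier := {w | ψ w = c • w}
        add_mem' := by
          intro x y hx hy
          simp only [Set.mem_setOf_eq] at *
          rw [ψ.map_add, hx, hy, smul_add]
        zero_mem' := by simp
        smul_mem' := by
          intro r w hw
          simp only [Set.mem_setOf_eq] at *
          rw [ψ.map_smul, hw]
          rw [← hksmul c w, ← mul_smul, ← hksmul c (r • w), ← mul_smul]
          congr 1
          have : (MonoidAlgebra.single 1 c : R) = algebraMap k R c := by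
            rw [MonoidAlgebra.coe_algebraMap]
            simp
          rw [this]
          exact (Algebra.commutes c r).symm }
    have hvK : v ∈ K' := hv.apply_eq_smul
    have : K' = ⊤ := by
      rcases hsimple.eq_bot_or_eq_top K' with h | h
      · exfalso
        rw [h] at hvK
        exact hv.right ((Submodule.mem_bot R).mp hvK)
      · exact h
    intro w
    have : w ∈ K' := this ▸ Submodule.mem_top
    exact this
  -- density argument
  haveI : IsSemisimpleModule R V := by
    rw [← sSup_simples_eq_top_iff_isSemisimpleModule]
    refine le_antisymm le_top (le_sSup ?_)
    have : IsSimpleModule R (⊤ : Submodule R V) := IsSimpleModule.congr Submodule.topEquiv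
    exact this
  let bV := Module.Free.chooseBasis k V
  set κ := Module.Free.ChooseBasisIndex k V with hκ
  haveI : Nonempty κ := bV.index_nonempty
  haveI : IsSemisimpleModule R (κ → V) := by
    refine isSemisimpleModule_of_isSemisimpleModule_submodule'
      (p := fun i => LinearMap.range (LinearMap.single R (fun _ : κ => V) i)) (fun i => ?_)
      (LinearMap.iSup_range_single R _)
    have hinj : Function.Injective (LinearMap.single R (fun _ : κ => V) i) := by
      intro x y h
      have := congrFun (congrArg (fun f => (f : κ → V)) h) i
      simpa using this
    exact IsSemisimpleModule.congr (LinearEquiv.ofInjective _ hinj).symm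
  let x₀ : κ → V := fun i => bV i
  let U : Submodule R (κ → V) := Submodule.span R {x₀}
  obtain ⟨U', hU'⟩ := exists_isCompl U
  let π : (κ → V) →ₗ[R] (κ → V) := U.subtype.comp (Submodule.linearProjOfIsCompl U U' hU')
  have hπ_mem : ∀ z, π z ∈ U := fun z => Submodule.coe_mem _
  have hπ_id : ∀ z ∈ U, π z = z := by
    intro z hz
    show (U.subtype (Submodule.linearProjOfIsCompl U U' hU' z)) = z
    exact congrArg Subtype.val (Submodule.linearProjOfIsCompl_apply_left hU' ⟨z, hz⟩)
  have hx₀U : x₀ ∈ U := Submodule.mem_span_singleton_self x₀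
  -- the matrix of π
  have schur' : ∀ i j : κ, ∃ c : k, ∀ v : V,
      π (LinearMap.single R (fun _ : κ => V) j v) i = c • v := by
    intro i j
    obtain ⟨c, hc⟩ := schur ((LinearMap.proj i).comp (π.comp (LinearMap.single R _ j)))
    exact ⟨c, fun v => hc v⟩
  choose c hc using schur'
  have hπ_apply : ∀ (z : κ → V) (i : κ), π z i = ∑ j, c i j • z j := by
    intro z i
    have hz : z = ∑ j, LinearMap.single R (fun _ : κ => V) j (z j) := by
      ext i'
      rw [Finset.sum_apply]
      simp [LinearMap.single_apply, Finset.sum_pi_single']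
    conv_lhs => rw [hz]
    rw [map_sum, Finset.sum_apply]
    exact Finset.sum_congr rfl fun j _ => hc i j (z j)
  have hbasis : ∀ i, bV i = ∑ j, c i j • bV j := by
    intro i
    conv_lhs => rw [show bV i = x₀ i from rfl, ← hπ_id x₀ hx₀U]
    exact hπ_apply x₀ i
  -- main conclusion
  rw [eq_top_iff]
  intro f _
  let y : κ → V := fun i => f (bV i)
  have hy : y ∈ U := by
    have : π y = y := by
      ext i
      rw [hπ_apply]
      show ∑ j, c i j • f (bV j) = f (bV i)
      conv_rhs => rw [hbasis i]
      rw [map_sum]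
      exact Finset.sum_congr rfl fun j _ => (map_smul f (c i j) (bV j)).symm
    rw [← this]; exact hπ_mem y
  obtain ⟨r, hr⟩ := (Submodule.mem_span_singleton).mp hy
  have hfr : φ r = f := by
    refine bV.ext fun i => ?_
    have := congrFun hr i
    show φ r (bV i) = f (bV i)
    rw [← hsmul]
    exact this
  have hφmem : ∀ r : R, φ r ∈ Submodule.span k (Set.range ⇑ρ) := by
    intro r
    induction r using MonoidAlgebra.induction_linear with
    | zero => rw [map_zero]; exact Submodule.zero_mem _
    | add a b ha hb => rw [map_add]; exact Submodule.add_mem _ ha hb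
    | single g b =>
      rw [MonoidAlgebra.lift_single]
      exact Submodule.smul_mem _ _ (Submodule.subset_span ⟨g, rfl⟩)
  rw [← hfr]
  exact hφmem r

end Burnside

section SpanInj

variable {K : Type*} [Field K] {ι G : Type*} [Fintype ι] [DecidableEq ι]

/-- A family of matrices spans everything iff the associated "trace pairing" system
has only the trivial solution. -/
theorem span_top_iff_inj (v : G → Matrix ι ι K) :
    Submodule.span K (Set.range v) = ⊤ ↔
      ∀ X : Matrix ι ι K, (∀ g, ∑ i, ∑ j, v g i j * X i j = 0) → X = 0 := by
  constructor
  · intro hspan X hX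
    let β : Matrix ι ι K →ₗ[K] K :=
      { toFun := fun Y => ∑ i, ∑ j, Y i j * X i j
        map_add' := by
          intro Y Z
          simp [Matrix.add_apply, add_mul, Finset.sum_add_distrib]
        map_smul' := by
          intro cc Y
          simp [Matrix.smul_apply, smul_eq_mul, Finset.mul_sum, mul_assoc] }
    have hβ : ∀ Y : Matrix ι ι K, β Y = 0 := by
      intro Y
      have hY : Y ∈ Submodule.span K (Set.range v) := hspan ▸ Submodule.mem_top
      induction hY using Submodule.span_induction with
      | mem x hx => obtain ⟨g, rfl⟩ := hx; exact hX g
      | zero => simp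
      | add x y _ _ hx hy => rw [map_add, hx, hy, add_zero]
      | smul c x _ hx => rw [map_smul, hx, smul_zero]
    ext i j
    have := hβ (Matrix.single i j 1)
    simp only [β, LinearMap.coe_mk, AddHom.coe_mk] at this
    rw [show (0 : Matrix ι ι K) i j = 0 from rfl]
    rw [← this]
    rw [Finset.sum_eq_single i, Finset.sum_eq_single j]
    · simp [Matrix.single]
    · intro b _ hb; simp [Matrix.single, hb, Ne.symm hb]
    · simp
    · intro b _ hb
      apply Finset.sum_eq_zero
      intro j' _
      simp [Matrix.single, Ne.symm hb]
    · simp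
  · intro hinj
    by_contra hne
    obtain ⟨x, hx⟩ : ∃ x : Matrix ι ι K, x ∉ Submodule.span K (Set.range v) := by
      by_contra h
      push_neg at h
      exact hne (eq_top_iff.mpr fun y _ => h y)
    obtain ⟨f, hfx, hf⟩ :=
      (Submodule.span K (Set.range v)).exists_dual_map_eq_bot_of_notMem hx inferInstance
    have hf0 : ∀ y ∈ Submodule.span K (Set.range v), f y = 0 := by
      intro y hy
      have : f y ∈ (Submodule.span K (Set.range v)).map f := ⟨y, hy, rfl⟩
      rwa [hf, Submodule.mem_bot] at this
    set X : Matrix ι ι K := Matrix.of fun i j => f (Matrix.single i j 1) with hXdef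
    have hexpand : ∀ Y : Matrix ι ι K, f Y = ∑ i, ∑ j, Y i j * X i j := by
      intro Y
      conv_lhs => rw [Matrix.matrix_eq_sum_single Y]
      rw [map_sum]
      refine Finset.sum_congr rfl fun i _ => ?_
      rw [map_sum]
      refine Finset.sum_congr rfl fun j _ => ?_
      rw [show Matrix.single i j (Y i j) = Y i j • Matrix.single i j 1 by
        ext i' j'; simp [Matrix.single, Matrix.smul_apply, mul_ite, mul_one, mul_zero]]
      rw [map_smul, smul_eq_mul]
      rfl
    have hX0 : X = 0 := by
      refine hinj X fun g => ?_
      rw [← hexpand (v g)]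
      exact hf0 _ (Submodule.subset_span ⟨g, rfl⟩)
    have : f x = 0 := by
      rw [hexpand x, hX0]
      simp
    exact hfx this

end SpanInj

section Transfer

variable {ι G : Type*} [Fintype ι] [DecidableEq ι]

/-- Transfer of injectivity of an integer linear system from characteristic `p` to `ℚ`. -/
theorem inj_rat_of_inj_charp (p : ℕ) [Fact p.Prime] (k : Type*) [Field k] [CharP k p]
    (A : G → Matrix ι ι ℤ)
    (h : ∀ X : Matrix ι ι k, (∀ g, ∑ i, ∑ j, ((A g i j : ℤ) : k) * X i j = 0) → X = 0) :
    ∀ X : Matrix ι ι ℚ, (∀ g, ∑ i, ∑ j, ((A g i j : ℤ) : ℚ) * X i j = 0) → X = 0 := by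
  intro X hX
  by_contra hX0
  -- clear denominators
  obtain ⟨d, hd⟩ := IsLocalization.exist_integer_multiples (nonZeroDivisors ℤ)
    (Finset.univ : Finset (ι × ι)) (fun q => X q.1 q.2)
  have h' : ∀ q : ι × ι, ∃ y : ℤ, (y : ℚ) = (d : ℤ) • X q.1 q.2 := by
    intro q
    obtain ⟨y, hy⟩ := hd q (Finset.mem_univ q)
    exact ⟨y, hy⟩
  choose Y hY using h'
  have hdne : ((d : ℤ) : ℚ) ≠ 0 := by
    exact_mod_cast nonZeroDivisors.coe_ne_zero d
  have hY0 : Y ≠ 0 := by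
    intro h0
    apply hX0
    ext i j
    have := hY (i, j)
    rw [h0] at this
    simp only [Pi.zero_apply, Int.cast_zero, zsmul_eq_mul] at this
    have := this.symm
    rcases mul_eq_zero.mp this with h1 | h1
    · exact absurd h1 hdne
    · simpa using h1
  -- integer relations
  have hrel : ∀ g, ∑ i, ∑ j, A g i j * Y (i, j) = 0 := by
    intro g
    have : ((∑ i, ∑ j, A g i j * Y (i, j) : ℤ) : ℚ) = 0 := by
      push_cast
      rw [show ∑ i, ∑ j, (A g i j : ℚ) * (Y (i, j) : ℚ)
          = ∑ i, ∑ j, (A g i j : ℚ) * ((d : ℤ) • X i j) from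
        Finset.sum_congr rfl fun i _ => Finset.sum_congr rfl fun j _ => by rw [hY (i, j)]]
      simp only [zsmul_eq_mul]
      rw [show ∑ i, ∑ j, (A g i j : ℚ) * (((d : ℤ) : ℚ) * X i j)
          = ((d : ℤ) : ℚ) * ∑ i, ∑ j, (A g i j : ℚ) * X i j by
        rw [Finset.mul_sum]
        refine Finset.sum_congr rfl fun i _ => ?_
        rw [Finset.mul_sum]
        exact Finset.sum_congr rfl fun j _ => by ring]
      rw [hX g, mul_zero]
    exact_mod_cast this
  -- extract p-powers
  obtain ⟨q₀, hq₀⟩ : ∃ q, Y q ≠ 0 := by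
    by_contra hq
    push_neg at hq
    exact hY0 (funext hq)
  have hp2 : 2 ≤ p := (Fact.out : p.Prime).two_le
  have hex : ∃ m, ¬ ∀ q, (p : ℤ) ^ m ∣ Y q := by
    refine ⟨(Y q₀).natAbs, fun hall => ?_⟩
    have hdvd := hall q₀
    have hle : (p : ℤ) ^ (Y q₀).natAbs ≤ |Y q₀| :=
      Int.le_of_dvd (abs_pos.mpr hq₀) ((dvd_abs _ _).mpr hdvd)
    have h1 : ((Y q₀).natAbs : ℤ) < 2 ^ (Y q₀).natAbs := by
      exact_mod_cast (Nat.lt_two_pow_self (n := (Y q₀).natAbs))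
    have h2 : (2 : ℤ) ^ (Y q₀).natAbs ≤ (p : ℤ) ^ (Y q₀).natAbs := by
      apply pow_le_pow_left₀ (by norm_num)
      exact_mod_cast hp2
    have : |Y q₀| = ((Y q₀).natAbs : ℤ) := (Int.abs_eq_natAbs _)
    omega
  let m₀ := Nat.find hex
  have hm₀ : ¬ ∀ q, (p : ℤ) ^ m₀ ∣ Y q := Nat.find_spec hex
  have hm₀pos : 0 < m₀ := by
    rcases Nat.eq_zero_or_pos m₀ with h0 | h0
    · exfalso; apply hm₀; rw [h0]; intro q; simp
    · exact h0
  have hdiv : ∀ q, (p : ℤ) ^ (m₀ - 1) ∣ Y q := by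
    by_contra hc
    exact (Nat.find_min hex (Nat.sub_lt hm₀pos one_pos)) hc
  choose Z hZ using fun q => hdiv q
  have hpne : ((p : ℤ) ^ (m₀ - 1)) ≠ 0 := pow_ne_zero _ (by exact_mod_cast hp2.trans_lt' (by norm_num) |>.ne')
  -- relations for Z
  have hrelZ : ∀ g, ∑ i, ∑ j, A g i j * Z (i, j) = 0 := by
    intro g
    have : (p : ℤ) ^ (m₀ - 1) * (∑ i, ∑ j, A g i j * Z (i, j)) = 0 := by
      rw [Finset.mul_sum]
      rw [show ∑ i, (p : ℤ) ^ (m₀ - 1) * ∑ j, A g i j * Z (i, j)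
          = ∑ i, ∑ j, A g i j * Y (i, j) from
        Finset.sum_congr rfl fun i _ => by
          rw [Finset.mul_sum]
          exact Finset.sum_congr rfl fun j _ => by rw [hZ (i, j)]; ring]
      exact hrel g
    exact (mul_eq_zero.mp this).resolve_left hpne
  have hZnotall : ¬ ∀ q, (p : ℤ) ∣ Z q := by
    intro hall
    apply hm₀
    intro q
    obtain ⟨w, hw⟩ := hall q
    refine ⟨w, ?_⟩
    rw [hZ q, hw, ← mul_assoc, ← pow_succ, Nat.sub_add_cancel hm₀pos]
  -- reduce mod p
  have := h (Matrix.of fun i j => ((Z (i, j) : ℤ) : k)) (fun g => by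
    have : ((∑ i, ∑ j, A g i j * Z (i, j) : ℤ) : k) = 0 := by rw [hrelZ g]; simp
    push_cast at this
    convert this using 2 <;> rfl)
  apply hZnotall
  intro q
  have hq := congrFun (congrFun this q.1) q.2
  simp only [Matrix.of_apply, Matrix.zero_apply] at hq
  exact (CharP.intCast_eq_zero_iff k p _).mp hq

end Transfer

section TransferF

variable {ι G : Type*} [Fintype ι] [DecidableEq ι] [Fintype G] [DecidableEq G]

/-- Transfer of injectivity of an integer linear system from `ℚ` to any characteristic-zero
field. -/
theorem inj_charzero_of_inj_rat (F : Type*) [Field F] [CharZero F]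
    (A : G → Matrix ι ι ℤ)
    (h : ∀ X : Matrix ι ι ℚ, (∀ g, ∑ i, ∑ j, ((A g i j : ℤ) : ℚ) * X i j = 0) → X = 0) :
    ∀ X : Matrix ι ι F, (∀ g, ∑ i, ∑ j, ((A g i j : ℤ) : F) * X i j = 0) → X = 0 := by
  -- the ℚ-linear system map
  let Λ : Matrix ι ι ℚ →ₗ[ℚ] (G → ℚ) :=
    { toFun := fun X => fun g => ∑ i, ∑ j, ((A g i j : ℤ) : ℚ) * X i j
      map_add' := by
        intro X Y
        funext g
        simp [Matrix.add_apply, mul_add, Finset.sum_add_distrib]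
      map_smul' := by
        intro c X
        funext g
        simp [Matrix.smul_apply, smul_eq_mul, Finset.mul_sum, mul_left_comm] }
  have hker : LinearMap.ker Λ = ⊥ := by
    rw [LinearMap.ker_eq_bot']
    intro X hXker
    exact h X fun g => congrFun hXker g
  obtain ⟨L, hL⟩ := Λ.exists_leftInverse_of_injective hker
  let r : G → Matrix ι ι ℚ := fun g => L (Pi.single g 1)
  have hLr : ∀ cv : G → ℚ, L cv = ∑ g, cv g • r g := by
    intro cv
    have : cv = ∑ g, cv g • (Pi.single g 1 : G → ℚ) := by
      ext g'
      rw [Finset.sum_apply]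
      simp [Pi.single_apply, Finset.sum_ite_eq']
    conv_lhs => rw [this]
    rw [map_sum]
    exact Finset.sum_congr rfl fun g _ => by rw [map_smul]
  -- the reproducing identity over ℚ, specialized to standard basis matrices
  have key : ∀ (i₀ j₀ i j : ι),
      ∑ g, ((A g i₀ j₀ : ℤ) : ℚ) * r g i j = (if i₀ = i ∧ j₀ = j then (1 : ℚ) else 0) := by
    intro i₀ j₀ i j
    have hid : L (Λ (Matrix.single i₀ j₀ 1)) = Matrix.single i₀ j₀ 1 := by
      have := congrArg (fun (f : Matrix ι ι ℚ →ₗ[ℚ] Matrix ι ι ℚ) =>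
        f (Matrix.single i₀ j₀ 1)) hL
      simpa using this
    have hΛstd : ∀ g, Λ (Matrix.single i₀ j₀ 1) g = ((A g i₀ j₀ : ℤ) : ℚ) := by
      intro g
      show (∑ i, ∑ j, ((A g i j : ℤ) : ℚ) * Matrix.single i₀ j₀ 1 i j) = _
      rw [Finset.sum_eq_single i₀]
      · rw [Finset.sum_eq_single j₀]
        · simp [Matrix.single]
        · intro b _ hb; simp [Matrix.single, hb, Ne.symm hb]
        · simp
      · intro b _ hb
        apply Finset.sum_eq_zero
        intro j' _
        simp [Matrix.single, hb, Ne.symm hb]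
      · simp
    have hmat : Matrix.single i₀ j₀ (1 : ℚ)
        = ∑ g, Λ (Matrix.single i₀ j₀ 1) g • r g := by
      rw [← hLr, hid]
    have hent := congrFun (congrFun hmat i) j
    rw [show (Matrix.single i₀ j₀ (1 : ℚ)) i j
        = (if i₀ = i ∧ j₀ = j then (1 : ℚ) else 0) from rfl] at hent
    rw [hent, Matrix.sum_apply]
    exact Finset.sum_congr rfl fun g _ => by rw [hΛstd g, Matrix.smul_apply, smul_eq_mul]
  -- cast the identity to F
  have keyF : ∀ (i₀ j₀ i j : ι),
      ∑ g, ((A g i₀ j₀ : ℤ) : F) * ((r g i j : ℚ) : F)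
        = (if i₀ = i ∧ j₀ = j then (1 : F) else 0) := by
    intro i₀ j₀ i j
    have hcast := congrArg (fun q : ℚ => (q : F)) (key i₀ j₀ i j)
    simp only [Rat.cast_sum, Rat.cast_mul, Rat.cast_intCast, apply_ite (fun q : ℚ => (q : F)),
      Rat.cast_one, Rat.cast_zero] at hcast
    exact hcast
  intro X hX
  ext i j
  show X i j = 0
  have calc1 : X i j = ∑ i₀, ∑ j₀, (if i₀ = i ∧ j₀ = j then (1 : F) else 0) * X i₀ j₀ := by
    rw [Finset.sum_eq_single i]
    · rw [Finset.sum_eq_single j]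
      · simp
      · intro b _ hb; simp [hb, Ne.symm hb]
      · simp
    · intro b _ hb
      apply Finset.sum_eq_zero
      intro j' _
      simp [hb, Ne.symm hb]
    · simp
  rw [calc1]
  have swap : ∑ i₀, ∑ j₀,
        (∑ g, ((A g i₀ j₀ : ℤ) : F) * ((r g i j : ℚ) : F)) * X i₀ j₀
      = ∑ g, ((r g i j : ℚ) : F) * (∑ i₀, ∑ j₀, ((A g i₀ j₀ : ℤ) : F) * X i₀ j₀) := by
    simp only [Finset.sum_mul]
    have hcomm : ∀ i₀ : ι, ∑ j₀, ∑ g, (((A g i₀ j₀ : ℤ) : F) * ((r g i j : ℚ) : F)) * X i₀ j₀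
        = ∑ g, ∑ j₀, (((A g i₀ j₀ : ℤ) : F) * ((r g i j : ℚ) : F)) * X i₀ j₀ :=
      fun i₀ => Finset.sum_comm
    rw [Finset.sum_congr rfl fun i₀ _ => hcomm i₀, Finset.sum_comm]
    simp only [Finset.mul_sum]
    exact Finset.sum_congr rfl fun g _ => Finset.sum_congr rfl fun i₀ _ =>
      Finset.sum_congr rfl fun j₀ _ => by ring
  rw [show (∑ i₀, ∑ j₀, (if i₀ = i ∧ j₀ = j then (1 : F) else 0) * X i₀ j₀)
      = ∑ i₀, ∑ j₀, (∑ g, ((A g i₀ j₀ : ℤ) : F) * ((r g i j : ℚ) : F)) * X i₀ j₀ from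
    Finset.sum_congr rfl fun i₀ _ => Finset.sum_congr rfl fun j₀ _ => by rw [keyF]]
  rw [swap]
  exact Finset.sum_eq_zero fun g _ => by rw [hX g, mul_zero]

end TransferF

/-- For a group `G` acting on an abelian group `M` (i.e. a `ℤ[G]`-module `M`) and a field `K`,
this says that `K ⊗_ℤ M` (with `G` acting through the factor `M`) is an irreducible
representation of `G` over `K`: it is nonzero and its only `G`-stable `K`-subspaces are `0`
and everything. -/
def IsIrreducibleBaseChange (G : Type) [Group G] (M : Type) [AddCommGroup M]
    [DistribMulAction G M] (K : Type) [Field K] : Prop :=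
  Nontrivial (K ⊗[ℤ] M) ∧
    ∀ V : Submodule K (K ⊗[ℤ] M),
      (∀ g : G, ∀ v ∈ V,
        (LinearMap.lTensor K (DistribMulAction.toAddMonoidHom M g).toIntLinearMap) v ∈ V) →
      V = ⊥ ∨ V = ⊤


section Equiv

lemma span_range_map_equiv_top_iff {K V W G : Type*} [Field K] [AddCommGroup V] [Module K V]
    [AddCommGroup W] [Module K W] (e : V ≃ₗ[K] W) (f : G → V) :
    Submodule.span K (Set.range fun g => e (f g)) = ⊤ ↔
      Submodule.span K (Set.range f) = ⊤ := by
  have himg : (Set.range fun g => e (f g)) = ⇑e '' Set.range f := by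
    rw [← Set.range_comp]; rfl
  rw [himg, show ⇑e '' Set.range f = ⇑e.toLinearMap '' Set.range f from rfl,
    ← Submodule.map_span]
  constructor
  · intro h
    rw [eq_top_iff]
    rintro x -
    have hx : e x ∈ (Submodule.span K (Set.range f)).map e.toLinearMap := h ▸ Submodule.mem_top
    obtain ⟨y, hy, hxy⟩ := hx
    rwa [← e.injective hxy]
  · intro h
    rw [h, Submodule.map_top, LinearEquiv.range]

end Equiv

theorem stmt15 (G : Type) [Group G] [Finite G] (p : ℕ) [Fact p.Prime]
    (M : Type) [AddCommGroup M] [DistribMulAction G M]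
    [Module.Free ℤ M] [Module.Finite ℤ M]
    (hirr : IsIrreducibleBaseChange G M (AlgebraicClosure (ZMod p)))
    (F : Type) [Field F] [CharZero F] :
    IsIrreducibleBaseChange G M F := by
  classical
  obtain ⟨hk_nontriv, hk_irr⟩ := hirr
  set k := AlgebraicClosure (ZMod p) with hkdef
  letI : Fintype G := Fintype.ofFinite G
  haveI : SMulCommClass G ℤ M :=
    ⟨fun g n m => map_zsmul (DistribMulAction.toAddMonoidHom M g) n m⟩
  let σ : G →* Module.End ℤ M := DistribMulAction.toModuleEnd ℤ M
  let b := Module.Free.chooseBasis ℤ M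
  let ι := Module.Free.ChooseBasisIndex ℤ M
  let A : G → Matrix ι ι ℤ := fun g => LinearMap.toMatrix b b (σ g)
  have hσ : ∀ g : G, (σ g : M →ₗ[ℤ] M)
      = (DistribMulAction.toAddMonoidHom M g).toIntLinearMap :=
    fun g => LinearMap.ext fun m => rfl
  haveI : Nontrivial (k ⊗[ℤ] M) := hk_nontriv
  haveI : Nonempty ι := (Algebra.TensorProduct.basis k b).index_nonempty
  haveI : FiniteDimensional k (k ⊗[ℤ] M) :=
    Module.Finite.of_basis (Algebra.TensorProduct.basis k b)
  haveI : CharP k p := inferInstance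
  -- the representation over k
  let ρk : G →* Module.End k (k ⊗[ℤ] M) :=
    ((Module.End.baseChangeHom ℤ k M).toRingHom.toMonoidHom).comp σ
  have hρk_coe : ∀ g : G, ⇑(ρk g) = ⇑(LinearMap.lTensor k
      ((DistribMulAction.toAddMonoidHom M g).toIntLinearMap)) := by
    intro g
    show ⇑((σ g).baseChange k) = _
    rw [LinearMap.baseChange_eq_ltensor, hσ g]
  have hspan_k : Submodule.span k (Set.range ⇑ρk) = ⊤ := by
    apply burnside_span ρk
    intro W hW
    have h1 := hk_irr W (fun g v hv => by
      rw [show (LinearMap.lTensor k ((DistribMulAction.toAddMonoidHom M g).toIntLinearMap)) v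
          = ρk g v from (congrFun (hρk_coe g) v).symm]
      exact hW g v hv)
    exact h1
  have htoMat_k : ∀ g : G, LinearMap.toMatrix (Algebra.TensorProduct.basis k b)
      (Algebra.TensorProduct.basis k b) (ρk g) = (A g).map (fun z : ℤ => (z : k)) := by
    intro g
    show LinearMap.toMatrix _ _ ((σ g).baseChange k) = _
    rw [LinearMap.toMatrix_baseChange]
    ext i j
    simp [Matrix.map_apply, algebraMap_int_eq]; rfl
  have hspan_km : Submodule.span k
      (Set.range fun g => (A g).map (fun z : ℤ => (z : k))) = ⊤ := by
    have h2 := (span_range_map_equiv_top_iff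
      (LinearMap.toMatrix (Algebra.TensorProduct.basis k b)
        (Algebra.TensorProduct.basis k b)) (fun g => ρk g)).mpr hspan_k
    rwa [show (Set.range fun g => LinearMap.toMatrix (Algebra.TensorProduct.basis k b)
        (Algebra.TensorProduct.basis k b) (ρk g))
        = Set.range fun g => (A g).map (fun z : ℤ => (z : k)) from
      congrArg Set.range (funext htoMat_k)] at h2
  -- transfer of the injectivity property through characteristics
  have hinj_k : ∀ X : Matrix ι ι k,
      (∀ g, ∑ i, ∑ j, ((A g i j : ℤ) : k) * X i j = 0) → X = 0 := by
    intro X hX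
    exact (span_top_iff_inj _).mp hspan_km X (fun g => by
      simpa [Matrix.map_apply] using hX g)
  have hinj_Q := inj_rat_of_inj_charp p k A hinj_k
  have hinj_F := inj_charzero_of_inj_rat F A hinj_Q
  have hspan_Fm : Submodule.span F
      (Set.range fun g => (A g).map (fun z : ℤ => (z : F))) = ⊤ := by
    apply (span_top_iff_inj _).mpr
    intro X hX
    exact hinj_F X (fun g => by simpa [Matrix.map_apply] using hX g)
  -- back to endomorphisms over F
  let ρF : G →* Module.End F (F ⊗[ℤ] M) :=
    ((Module.End.baseChangeHom ℤ F M).toRingHom.toMonoidHom).comp σ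
  have hρF_coe : ∀ g : G, ⇑(ρF g) = ⇑(LinearMap.lTensor F
      ((DistribMulAction.toAddMonoidHom M g).toIntLinearMap)) := by
    intro g
    show ⇑((σ g).baseChange F) = _
    rw [LinearMap.baseChange_eq_ltensor, hσ g]
  have htoMat_F : ∀ g : G, LinearMap.toMatrix (Algebra.TensorProduct.basis F b)
      (Algebra.TensorProduct.basis F b) (ρF g) = (A g).map (fun z : ℤ => (z : F)) := by
    intro g
    show LinearMap.toMatrix _ _ ((σ g).baseChange F) = _
    rw [LinearMap.toMatrix_baseChange]
    ext i j
    simp [Matrix.map_apply, algebraMap_int_eq]; rfl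
  have hspan_F : Submodule.span F (Set.range ⇑ρF) = ⊤ := by
    have h2 := (span_range_map_equiv_top_iff
      (LinearMap.toMatrix (Algebra.TensorProduct.basis F b)
        (Algebra.TensorProduct.basis F b)) (fun g => ρF g))
    apply h2.mp
    rwa [show (Set.range fun g => LinearMap.toMatrix (Algebra.TensorProduct.basis F b)
        (Algebra.TensorProduct.basis F b) (ρF g))
        = Set.range fun g => (A g).map (fun z : ℤ => (z : F)) from
      congrArg Set.range (funext htoMat_F)]
  -- conclude
  constructor
  · have i0 : ι := Classical.arbitrary ι
    exact ⟨(Algebra.TensorProduct.basis F b) i0, 0, Module.Basis.ne_zero _ i0⟩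
  · intro V hV
    by_cases hbot : V = ⊥
    · left; exact hbot
    right
    obtain ⟨v, hvV, hv0⟩ : ∃ v ∈ V, v ≠ (0 : F ⊗[ℤ] M) := by
      by_contra hc
      push_neg at hc
      exact hbot ((Submodule.eq_bot_iff V).mpr hc)
    have hstable : ∀ f : Module.End F (F ⊗[ℤ] M), ∀ u ∈ V, f u ∈ V := by
      intro f
      have hf : f ∈ Submodule.span F (Set.range ⇑ρF) := hspan_F ▸ Submodule.mem_top
      induction hf using Submodule.span_induction with
      | mem x hx =>
        obtain ⟨g, rfl⟩ := hx
        intro u hu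
        rw [show ρF g u = (LinearMap.lTensor F
            ((DistribMulAction.toAddMonoidHom M g).toIntLinearMap)) u
          from congrFun (hρF_coe g) u]
        exact hV g u hu
      | zero => intro u hu; simpa using V.zero_mem
      | add x y _ _ hx hy =>
        intro u hu
        rw [LinearMap.add_apply]
        exact V.add_mem (hx u hu) (hy u hu)
      | smul c x _ hx =>
        intro u hu
        rw [LinearMap.smul_apply]
        exact V.smul_mem c (hx u hu)
    rw [eq_top_iff]
    rintro w -
    have hker : LinearMap.ker (LinearMap.toSpanSingleton F (F ⊗[ℤ] M) v) = ⊥ :=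
      LinearMap.ker_toSpanSingleton (R := F) hv0
    obtain ⟨gmap, hg⟩ :=
      (LinearMap.toSpanSingleton F (F ⊗[ℤ] M) v).exists_leftInverse_of_injective hker
    have h1 : gmap v = 1 := by
      have h2 := congrArg (fun t : F →ₗ[F] F => t 1) hg
      simpa [LinearMap.toSpanSingleton_apply] using h2
    have hfv : (LinearMap.toSpanSingleton F (F ⊗[ℤ] M) w).comp gmap v = w := by
      simp [LinearMap.toSpanSingleton_apply, h1]
    rw [← hfv]
    exact hstable _ v hvV
end
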